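/- arXiv:2206.02293 — 4 statements merged into one kernel-verified Lean document; each statement's English description precedes it below -/
import Mathlib

section
/- Let m ∈ (1/2)ℕ, s ∈ (1/2)ℤ and p ∈ ℤ, and let τ lie in the upper half-plane, z₁, z₂ ∉ ℤτ + ℤ, t ∈ ℂ. Then (i) Φ^{(±)[m,s]}_1(τ, z₁, z₂+pτ, t) = e^{−2πimpz₁} Φ^{(±)[m,s+mp]}_1(τ, z₁, z₂, t); (ii) Φ^{(±)[m,s]}_2(τ, z₁, z₂+pτ, t) = (±1)^p e^{−2πimpz₁} Φ^{(±)[m,s+mp]}_2(τ, z₁, z₂, t); (iii) if (±1)^p = 1 then Φ^{(±)[m,s]}(τ, z₁, z₂+pτ, t) = e^{−2πimpz₁} Φ^{(±)[m,s+mp]}(τ, z₁, z₂, t). -/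
noncomputable section

open scoped BigOperators

namespace Mock

/-- `e x = exp(2πix)` -/
def e (x : ℂ) : ℂ := Complex.exp (2 * (Real.pi : ℂ) * Complex.I * x)

/-- `qpow τ a = q^a = exp(2πiaτ)` for a real exponent `a` -/
def qpow (τ : ℂ) (a : ℝ) : ℂ := Complex.exp (2 * (Real.pi : ℂ) * Complex.I * (a : ℂ) * τ)

/-- Jacobi theta function `θ^{(ε)}_{k,m}(τ,z)` -/
def theta (ε : ℂ) (k m : ℝ) (τ z : ℂ) : ℂ :=
  ∑' j : ℤ, ε ^ j * e ((m : ℂ) * ((j : ℂ) + (k : ℂ) / (2 * (m : ℂ))) * z)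
      * qpow τ (m * ((j : ℝ) + k / (2 * m)) ^ 2)

/-- `Φ^{(ε)[m,s]}_1` -/
def Phi1 (ε : ℂ) (m s : ℝ) (τ z₁ z₂ t : ℂ) : ℂ :=
  e (-(m : ℂ) * t) * ∑' j : ℤ,
    ε ^ j * e ((m : ℂ) * (j : ℂ) * (z₁ + z₂) + (s : ℂ) * z₁)
      * qpow τ (m * (j : ℝ) ^ 2 + s * (j : ℝ)) / (1 - e z₁ * qpow τ (j : ℝ))

/-- `Φ^{(ε)[m,s]}_2` -/
def Phi2 (ε : ℂ) (m s : ℝ) (τ z₁ z₂ t : ℂ) : ℂ :=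
  e (-(m : ℂ) * t) * ∑' j : ℤ,
    ε ^ j * e (-(m : ℂ) * (j : ℂ) * (z₁ + z₂) - (s : ℂ) * z₂)
      * qpow τ (m * (j : ℝ) ^ 2 + s * (j : ℝ)) / (1 - e (-z₂) * qpow τ (j : ℝ))

/-- `Φ^{(ε)[m,s]} = Φ₁ - Φ₂` -/
def Phi (ε : ℂ) (m s : ℝ) (τ z₁ z₂ t : ℂ) : ℂ :=
  Phi1 ε m s τ z₁ z₂ t - Phi2 ε m s τ z₁ z₂ t

/-- `E(x) = 2∫₀ˣ e^{−πt²} dt` -/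
def Efun (x : ℝ) : ℝ := 2 * ∫ t in (0:ℝ)..x, Real.exp (-Real.pi * t ^ 2)

/-- `P^{(ε)}_{j,m}(τ,w)` -/
def Pfun (ε : ℂ) (j m : ℝ) (τ w : ℂ) : ℂ :=
  ∑' k : ℤ, ε ^ k *
    (Efun ((j + 2 * m * (k : ℝ) - 2 * m * (w.im / τ.im)) * Real.sqrt (τ.im / m)) : ℂ) *
    Complex.exp (-(Real.pi : ℂ) * Complex.I * τ * ((j : ℂ) + 2 * (m : ℂ) * (k : ℂ)) ^ 2 / (2 * (m : ℂ))
      + 2 * (Real.pi : ℂ) * Complex.I * ((j : ℂ) + 2 * (m : ℂ) * (k : ℂ)) * w)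

/-- `Q^{(ε)}_{j,m}(τ,w)` -/
def Qfun (ε : ℂ) (j m : ℝ) (τ w : ℂ) : ℂ :=
  ∑' k : ℤ, ε ^ k * (if 0 ≤ k then (1 : ℂ) else -1) *
    Complex.exp (-(Real.pi : ℂ) * Complex.I * τ * ((j : ℂ) + 2 * (m : ℂ) * (k : ℂ)) ^ 2 / (2 * (m : ℂ))
      + 2 * (Real.pi : ℂ) * Complex.I * ((j : ℂ) + 2 * (m : ℂ) * (k : ℂ)) * w)

/-- `R^{(ε)}_{j,m}(τ,w)`, the sum over `n = j + 2mk`, `k ∈ ℤ` -/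
def Rfun (ε : ℂ) (j m : ℝ) (τ w : ℂ) : ℂ :=
  ∑' k : ℤ, ε ^ k *
    ((Real.sign (2 * m * (k : ℝ) + 2 * m - 1 / 2) : ℂ)
      - (Efun ((j + 2 * m * (k : ℝ) - 2 * m * (w.im / τ.im)) * Real.sqrt (τ.im / m)) : ℂ)) *
    Complex.exp (-(Real.pi : ℂ) * Complex.I * τ * ((j : ℂ) + 2 * (m : ℂ) * (k : ℂ)) ^ 2 / (2 * (m : ℂ))
      + 2 * (Real.pi : ℂ) * Complex.I * ((j : ℂ) + 2 * (m : ℂ) * (k : ℂ)) * w)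

/-- correction term `Φ^{(ε)[m,s]}_{add}`; the finite sum over `k ∈ s+ℤ`, `s ≤ k < s+2m`
is parametrized by `k = s + n`, `0 ≤ n < 2m`. -/
def PhiAdd (ε : ℂ) (m s : ℝ) (τ z₁ z₂ t : ℂ) : ℂ :=
  -(1/2) * e (-(m : ℂ) * t) *
    ∑' n : ℤ, if 0 ≤ n ∧ (n : ℝ) < 2 * m then
      Rfun ε (s + (n : ℝ)) m τ ((z₁ - z₂) / 2) *
        (theta ε (s + (n : ℝ)) m τ (z₁ + z₂) - theta ε (-(s + (n : ℝ))) m τ (z₁ + z₂))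
    else 0

/-- Zwegers modification `Φ̃^{(ε)[m,s]}` -/
def PhiTilde (ε : ℂ) (m s : ℝ) (τ z₁ z₂ t : ℂ) : ℂ :=
  Phi ε m s τ z₁ z₂ t + PhiAdd ε m s τ z₁ z₂ t

/-- Dedekind eta function -/
def eta (τ : ℂ) : ℂ := qpow τ (1/24) * ∏' n : ℕ, (1 - qpow τ ((n : ℝ) + 1))

/-- Mumford theta `ϑ₁₁(τ,z) = i θ^{(−)}_{1/2,1/2}(τ,2z)` -/
def vtheta11 (τ z : ℂ) : ℂ := Complex.I * theta (-1) (1/2) (1/2) τ (2 * z)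

/-- Mumford theta `ϑ₁₀(τ,z) = θ^{(+)}_{1/2,1/2}(τ,2z)` -/
def vtheta10 (τ z : ℂ) : ℂ := theta 1 (1/2) (1/2) τ (2 * z)

/-- the half-odd integer `(2n+1)/2` -/
def hodd (n : ℕ) : ℝ := (2 * (n : ℝ) + 1) / 2

def psi1 (m : ℝ) (τ z : ℂ) : ℂ :=
  PhiTilde (-1) m (1/2) τ (z/2 + τ/2 - 1/2) (z/2 - τ/2 + 1/2) 0
def psi2 (m : ℝ) (τ z : ℂ) : ℂ :=
  PhiTilde (-1) m (1/2) τ (z/2 + τ/2) (z/2 - τ/2) 0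
def psi3 (m : ℝ) (τ z : ℂ) : ℂ :=
  PhiTilde (-1) m (1/2) τ (z/2 - 1/2) (z/2 + 1/2) 0

def Xi1 (m : ℝ) (p : ℤ) (τ z : ℂ) : ℂ :=
  qpow τ (-m/4) * theta (-1) ((2 * (p : ℝ) + 1) * m) (m + 1/2) τ 0 * psi1 m τ z
def Xi2 (m : ℝ) (p : ℤ) (τ z : ℂ) : ℂ :=
  qpow τ (-m/4) * theta 1 ((2 * (p : ℝ) + 1) * m) (m + 1/2) τ 0 * psi2 m τ z
def Xi3 (m : ℝ) (p : ℤ) (τ z : ℂ) : ℂ :=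
  theta (-1) (2 * (p : ℝ) * m) (m + 1/2) τ 0 * psi3 m τ z

def Ups1 (m : ℝ) (p : ℤ) (τ z : ℂ) : ℂ :=
  -Complex.I * eta τ ^ 3 *
    (theta (-1) ((p : ℝ) + 1/2) (m + 1/2) τ z - theta (-1) (-((p : ℝ) + 1/2)) (m + 1/2) τ z) /
    theta 1 0 (1/2) τ z
def Ups2 (m : ℝ) (p : ℤ) (τ z : ℂ) : ℂ :=
  eta τ ^ 3 *
    (theta 1 ((p : ℝ) + 1/2) (m + 1/2) τ z - theta 1 (-((p : ℝ) + 1/2)) (m + 1/2) τ z) /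
    theta (-1) 0 (1/2) τ z
def Ups3 (m : ℝ) (p : ℤ) (τ z : ℂ) : ℂ :=
  -Complex.I * eta τ ^ 3 *
    (theta (-1) (p : ℝ) (m + 1/2) τ z - theta (-1) (-(p : ℝ)) (m + 1/2) τ z) /
    theta 1 (1/2) (1/2) τ z

def G1 (m : ℝ) (p : ℤ) (τ z : ℂ) : ℂ := Xi1 m p τ z - Ups1 m p τ z
def G2 (m : ℝ) (p : ℤ) (τ z : ℂ) : ℂ := Xi2 m p τ z - Ups2 m p τ z
def G3 (m : ℝ) (p : ℤ) (τ z : ℂ) : ℂ := Xi3 m p τ z - Ups3 m p τ z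

/-- `ω^{[m]}_{j,k}(z₁,z₂,z₃)` -/
def omega (m : ℝ) (j k : ℕ) (z₁ z₂ z₃ : ℂ) : ℂ :=
  e ((j : ℂ) * (z₁ - z₂)) * e ((2 * (m : ℂ) * (j : ℂ) - (k : ℂ)) * (z₁ - 2 * z₂ - z₃) / 2)
  + e (-(j : ℂ) * (z₁ - z₂)) * e (-(2 * (m : ℂ) * (j : ℂ) - (k : ℂ)) * (z₁ - 2 * z₂ - z₃) / 2)
  - e ((j : ℂ) * (z₁ - z₂)) * e ((2 * (m : ℂ) * (j : ℂ) - (k : ℂ)) * (z₁ + z₃) / 2)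
  - e (-(j : ℂ) * (z₁ - z₂)) * e (-(2 * (m : ℂ) * (j : ℂ) - (k : ℂ)) * (z₁ + z₃) / 2)

/-- indefinite modular form `g^{(1)[m,p]}_k(τ)` (with the convention of the paper,
split according to `k = m` or `k < m`). -/
def g1 (m : ℝ) (p : ℤ) (k : ℝ) (τ : ℂ) : ℂ :=
  if k = m then
    ((∑' x : ℤ × ℤ, if 0 < x.2 ∧ x.2 ≤ x.1 then
        (-1 : ℂ) ^ x.1 * e ((m : ℂ) / 2) *
          qpow τ ((m + 1/2) * ((x.1 : ℝ) + m * (2 * (p : ℝ) + 1) / (2 * m + 1)) ^ 2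
            - m * ((x.2 : ℝ) + (p : ℝ)) ^ 2) else 0)
      - (∑' x : ℤ × ℤ, if x.1 < x.2 ∧ x.2 ≤ 0 then
        (-1 : ℂ) ^ x.1 * e ((m : ℂ) / 2) *
          qpow τ ((m + 1/2) * ((x.1 : ℝ) + m * (2 * (p : ℝ) + 1) / (2 * m + 1)) ^ 2
            - m * ((x.2 : ℝ) + (p : ℝ)) ^ 2) else 0))
    + (1/2) * e ((m : ℂ) / 2) * theta (-1) ((2 * (p : ℝ) + 1) * m) (m + 1/2) τ 0 *
        ∑ r ∈ Finset.Icc (-p) p, qpow τ (-m * (r : ℝ) ^ 2)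
  else
    ((∑' x : ℤ × ℤ, if 0 ≤ x.2 ∧ x.2 < x.1 then
        (-1 : ℂ) ^ x.1 * e ((k : ℂ) / 2) *
          qpow τ ((m + 1/2) * ((x.1 : ℝ) + m * (2 * (p : ℝ) + 1) / (2 * m + 1)) ^ 2
            - m * ((x.2 : ℝ) + (p : ℝ) + (m + k) / (2 * m)) ^ 2) else 0)
      - (∑' x : ℤ × ℤ, if x.1 ≤ x.2 ∧ x.2 < 0 then
        (-1 : ℂ) ^ x.1 * e ((k : ℂ) / 2) *
          qpow τ ((m + 1/2) * ((x.1 : ℝ) + m * (2 * (p : ℝ) + 1) / (2 * m + 1)) ^ 2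
            - m * ((x.2 : ℝ) + (p : ℝ) + (m + k) / (2 * m)) ^ 2) else 0))
    + ((∑' x : ℤ × ℤ, if 0 ≤ x.2 ∧ x.2 ≤ x.1 then
        (-1 : ℂ) ^ x.1 * e ((k : ℂ) / 2) *
          qpow τ ((m + 1/2) * ((x.1 : ℝ) + m * (2 * (p : ℝ) + 1) / (2 * m + 1)) ^ 2
            - m * ((x.2 : ℝ) + (p : ℝ) + (m - k) / (2 * m)) ^ 2) else 0)
      - (∑' x : ℤ × ℤ, if x.1 < x.2 ∧ x.2 < 0 then
        (-1 : ℂ) ^ x.1 * e ((k : ℂ) / 2) *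
          qpow τ ((m + 1/2) * ((x.1 : ℝ) + m * (2 * (p : ℝ) + 1) / (2 * m + 1)) ^ 2
            - m * ((x.2 : ℝ) + (p : ℝ) + (m - k) / (2 * m)) ^ 2) else 0))
    + e ((k : ℂ) / 2) * theta (-1) ((2 * (p : ℝ) + 1) * m) (m + 1/2) τ 0 *
        ∑ r ∈ Finset.Icc (-p + 1) p, qpow τ (-m * ((r : ℝ) + (k - m) / (2 * m)) ^ 2)

/-- indefinite modular form `g^{(2)[m,p]}_k(τ)` -/
def g2 (m : ℝ) (p : ℤ) (k : ℝ) (τ : ℂ) : ℂ :=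
  if k = m then
    -(-1 : ℂ) ^ p *
      ((∑' x : ℤ × ℤ, if 0 < x.2 ∧ x.2 ≤ x.1 then
          (-1 : ℂ) ^ x.2 *
            qpow τ ((m + 1/2) * ((x.1 : ℝ) + m * (2 * (p : ℝ) + 1) / (2 * m + 1)) ^ 2
              - m * ((x.2 : ℝ) + (p : ℝ)) ^ 2) else 0)
        - (∑' x : ℤ × ℤ, if x.1 < x.2 ∧ x.2 ≤ 0 then
          (-1 : ℂ) ^ x.2 *
            qpow τ ((m + 1/2) * ((x.1 : ℝ) + m * (2 * (p : ℝ) + 1) / (2 * m + 1)) ^ 2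
              - m * ((x.2 : ℝ) + (p : ℝ)) ^ 2) else 0))
    - (1/2) * theta 1 ((2 * (p : ℝ) + 1) * m) (m + 1/2) τ 0 *
        ∑ r ∈ Finset.Icc (-p) p, (-1 : ℂ) ^ r * qpow τ (-m * (r : ℝ) ^ 2)
  else
    (-1 : ℂ) ^ p *
      ((∑' x : ℤ × ℤ, if 0 ≤ x.2 ∧ x.2 < x.1 then
          (-1 : ℂ) ^ x.2 *
            qpow τ ((m + 1/2) * ((x.1 : ℝ) + m * (2 * (p : ℝ) + 1) / (2 * m + 1)) ^ 2
              - m * ((x.2 : ℝ) + (p : ℝ) + (m + k) / (2 * m)) ^ 2) else 0)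
        - (∑' x : ℤ × ℤ, if x.1 ≤ x.2 ∧ x.2 < 0 then
          (-1 : ℂ) ^ x.2 *
            qpow τ ((m + 1/2) * ((x.1 : ℝ) + m * (2 * (p : ℝ) + 1) / (2 * m + 1)) ^ 2
              - m * ((x.2 : ℝ) + (p : ℝ) + (m + k) / (2 * m)) ^ 2) else 0))
    - (-1 : ℂ) ^ p *
      ((∑' x : ℤ × ℤ, if 0 ≤ x.2 ∧ x.2 ≤ x.1 then
          (-1 : ℂ) ^ x.2 *
            qpow τ ((m + 1/2) * ((x.1 : ℝ) + m * (2 * (p : ℝ) + 1) / (2 * m + 1)) ^ 2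
              - m * ((x.2 : ℝ) + (p : ℝ) + (m - k) / (2 * m)) ^ 2) else 0)
        - (∑' x : ℤ × ℤ, if x.1 < x.2 ∧ x.2 < 0 then
          (-1 : ℂ) ^ x.2 *
            qpow τ ((m + 1/2) * ((x.1 : ℝ) + m * (2 * (p : ℝ) + 1) / (2 * m + 1)) ^ 2
              - m * ((x.2 : ℝ) + (p : ℝ) + (m - k) / (2 * m)) ^ 2) else 0))
    - theta 1 ((2 * (p : ℝ) + 1) * m) (m + 1/2) τ 0 *
        ∑ r ∈ Finset.Icc (-p + 1) p, (-1 : ℂ) ^ r *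
          qpow τ (-m * ((r : ℝ) + (k - m) / (2 * m)) ^ 2)

/-- indefinite modular form `g^{(3)[m,p]}_k(τ)` -/
def g3 (m : ℝ) (p : ℤ) (k : ℝ) (τ : ℂ) : ℂ :=
  if k = m then
    e ((m : ℂ) / 2) *
      ((∑' x : ℤ × ℤ, if 0 < x.2 ∧ x.2 ≤ x.1 then
          (-1 : ℂ) ^ x.1 *
            qpow τ ((m + 1/2) * ((x.1 : ℝ) + 2 * m * (p : ℝ) / (2 * m + 1)) ^ 2
              - m * ((x.2 : ℝ) - 1/2 + (p : ℝ)) ^ 2) else 0)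
        - (∑' x : ℤ × ℤ, if x.1 < x.2 ∧ x.2 ≤ 0 then
          (-1 : ℂ) ^ x.1 *
            qpow τ ((m + 1/2) * ((x.1 : ℝ) + 2 * m * (p : ℝ) / (2 * m + 1)) ^ 2
              - m * ((x.2 : ℝ) - 1/2 + (p : ℝ)) ^ 2) else 0))
    + e ((m : ℂ) / 2) * theta (-1) (2 * (p : ℝ) * m) (m + 1/2) τ 0 *
        ∑ r ∈ Finset.Icc 1 p, qpow τ (-m * (2 * (r : ℝ) - 1) ^ 2 / 4)
  else
    ((∑' x : ℤ × ℤ, if 0 ≤ x.2 ∧ x.2 < x.1 then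
        (-1 : ℂ) ^ x.1 * e ((k : ℂ) / 2) *
          qpow τ ((m + 1/2) * ((x.1 : ℝ) + 2 * m * (p : ℝ) / (2 * m + 1)) ^ 2
            - m * ((x.2 : ℝ) + (p : ℝ) + k / (2 * m)) ^ 2) else 0)
      - (∑' x : ℤ × ℤ, if x.1 ≤ x.2 ∧ x.2 < 0 then
        (-1 : ℂ) ^ x.1 * e ((k : ℂ) / 2) *
          qpow τ ((m + 1/2) * ((x.1 : ℝ) + 2 * m * (p : ℝ) / (2 * m + 1)) ^ 2
            - m * ((x.2 : ℝ) + (p : ℝ) + k / (2 * m)) ^ 2) else 0))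
    + ((∑' x : ℤ × ℤ, if 0 ≤ x.2 ∧ x.2 ≤ x.1 then
        (-1 : ℂ) ^ x.1 * e ((k : ℂ) / 2) *
          qpow τ ((m + 1/2) * ((x.1 : ℝ) + 2 * m * (p : ℝ) / (2 * m + 1)) ^ 2
            - m * ((x.2 : ℝ) + (p : ℝ) - k / (2 * m)) ^ 2) else 0)
      - (∑' x : ℤ × ℤ, if x.1 < x.2 ∧ x.2 < 0 then
        (-1 : ℂ) ^ x.1 * e ((k : ℂ) / 2) *
          qpow τ ((m + 1/2) * ((x.1 : ℝ) + 2 * m * (p : ℝ) / (2 * m + 1)) ^ 2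
            - m * ((x.2 : ℝ) + (p : ℝ) - k / (2 * m)) ^ 2) else 0))
    + e ((k : ℂ) / 2) * theta (-1) (2 * (p : ℝ) * m) (m + 1/2) τ 0 *
        ∑ r ∈ Finset.Icc (-p + 1) (p - 1), qpow τ (-(2 * m * (r : ℝ) + k) ^ 2 / (4 * m))


theorem statement0 (m s : ℝ) (hm : ∃ n : ℕ, 0 < n ∧ m = (n : ℝ) / 2)
    (hs : ∃ n : ℤ, s = (n : ℝ) / 2) (p : ℤ)
    (τ : ℂ) (hτ : 0 < τ.im) (z₁ z₂ t : ℂ)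
    (hz₁ : ∀ a b : ℤ, z₁ ≠ (a : ℂ) * τ + (b : ℂ))
    (hz₂ : ∀ a b : ℤ, z₂ ≠ (a : ℂ) * τ + (b : ℂ))
    (ε : ℂ) (hε : ε = 1 ∨ ε = -1) :
    Phi1 ε m s τ z₁ (z₂ + (p : ℂ) * τ) t
        = e (-(m : ℂ) * (p : ℂ) * z₁) * Phi1 ε m (s + m * (p : ℝ)) τ z₁ z₂ t ∧
    Phi2 ε m s τ z₁ (z₂ + (p : ℂ) * τ) t
        = ε ^ p * e (-(m : ℂ) * (p : ℂ) * z₁) * Phi2 ε m (s + m * (p : ℝ)) τ z₁ z₂ t ∧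
    (ε ^ p = 1 →
      Phi ε m s τ z₁ (z₂ + (p : ℂ) * τ) t
        = e (-(m : ℂ) * (p : ℂ) * z₁) * Phi ε m (s + m * (p : ℝ)) τ z₁ z₂ t) := by
  have hε0 : ε ≠ 0 := by rcases hε with h | h <;> simp [h]
  have key1 : (∑' j : ℤ,
      ε ^ j * e ((m : ℂ) * (j : ℂ) * (z₁ + (z₂ + (p : ℂ) * τ)) + (s : ℂ) * z₁)
        * qpow τ (m * (j : ℝ) ^ 2 + s * (j : ℝ)) / (1 - e z₁ * qpow τ (j : ℝ)))
      = e (-(m : ℂ) * (p : ℂ) * z₁) * ∑' j : ℤ,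
      ε ^ j * e ((m : ℂ) * (j : ℂ) * (z₁ + z₂) + ((s + m * (p : ℝ) : ℝ) : ℂ) * z₁)
        * qpow τ (m * (j : ℝ) ^ 2 + (s + m * (p : ℝ)) * (j : ℝ)) / (1 - e z₁ * qpow τ (j : ℝ)) := by
    rw [← tsum_mul_left]
    refine tsum_congr fun j => ?_
    rw [← mul_div_assoc]
    congr 1
    have hexp : e ((m : ℂ) * (j : ℂ) * (z₁ + (z₂ + (p : ℂ) * τ)) + (s : ℂ) * z₁)
        * qpow τ (m * (j : ℝ) ^ 2 + s * (j : ℝ))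
        = e (-(m : ℂ) * (p : ℂ) * z₁) *
          (e ((m : ℂ) * (j : ℂ) * (z₁ + z₂) + ((s + m * (p : ℝ) : ℝ) : ℂ) * z₁)
            * qpow τ (m * (j : ℝ) ^ 2 + (s + m * (p : ℝ)) * (j : ℝ))) := by
      simp only [e, qpow, ← Complex.exp_add]
      congr 1
      push_cast
      ring
    linear_combination ε ^ j * hexp
  have key2 : (∑' j : ℤ,
      ε ^ j * e (-(m : ℂ) * (j : ℂ) * (z₁ + (z₂ + (p : ℂ) * τ)) - (s : ℂ) * (z₂ + (p : ℂ) * τ))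
        * qpow τ (m * (j : ℝ) ^ 2 + s * (j : ℝ)) / (1 - e (-(z₂ + (p : ℂ) * τ)) * qpow τ (j : ℝ)))
      = ε ^ p * e (-(m : ℂ) * (p : ℂ) * z₁) * ∑' j : ℤ,
      ε ^ j * e (-(m : ℂ) * (j : ℂ) * (z₁ + z₂) - ((s + m * (p : ℝ) : ℝ) : ℂ) * z₂)
        * qpow τ (m * (j : ℝ) ^ 2 + (s + m * (p : ℝ)) * (j : ℝ)) / (1 - e (-z₂) * qpow τ (j : ℝ)) := by
    rw [← tsum_mul_left, ← (Equiv.addRight p).tsum_eq]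
    refine tsum_congr fun j => ?_
    simp only [Equiv.coe_addRight]
    have hden : (1 : ℂ) - e (-(z₂ + (p : ℂ) * τ)) * qpow τ (((j + p : ℤ)) : ℝ)
        = 1 - e (-z₂) * qpow τ ((j : ℤ) : ℝ) := by
      have h : e (-(z₂ + (p : ℂ) * τ)) * qpow τ (((j + p : ℤ)) : ℝ)
          = e (-z₂) * qpow τ ((j : ℤ) : ℝ) := by
        simp only [e, qpow, ← Complex.exp_add]
        congr 1
        push_cast
        ring
      rw [h]
    rw [hden, ← mul_div_assoc, zpow_add₀ hε0]
    congr 1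
    have hexp : e (-(m : ℂ) * ((j + p : ℤ) : ℂ) * (z₁ + (z₂ + (p : ℂ) * τ)) - (s : ℂ) * (z₂ + (p : ℂ) * τ))
        * qpow τ (m * ((j + p : ℤ) : ℝ) ^ 2 + s * ((j + p : ℤ) : ℝ))
        = e (-(m : ℂ) * (p : ℂ) * z₁) *
          (e (-(m : ℂ) * (j : ℂ) * (z₁ + z₂) - ((s + m * (p : ℝ) : ℝ) : ℂ) * z₂)
            * qpow τ (m * (j : ℝ) ^ 2 + (s + m * (p : ℝ)) * (j : ℝ))) := by
      simp only [e, qpow, ← Complex.exp_add]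
      congr 1
      push_cast
      ring
    linear_combination ε ^ j * ε ^ p * hexp
  have ha : Phi1 ε m s τ z₁ (z₂ + (p : ℂ) * τ) t
      = e (-(m : ℂ) * (p : ℂ) * z₁) * Phi1 ε m (s + m * (p : ℝ)) τ z₁ z₂ t := by
    unfold Phi1
    rw [key1]
    ring
  have hb : Phi2 ε m s τ z₁ (z₂ + (p : ℂ) * τ) t
      = ε ^ p * e (-(m : ℂ) * (p : ℂ) * z₁) * Phi2 ε m (s + m * (p : ℝ)) τ z₁ z₂ t := by
    unfold Phi2
    rw [key2]
    ring
  refine ⟨ha, hb, fun hP => ?_⟩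
  unfold Phi
  rw [ha, hb, hP]
  ring

end Mock
end
end

section
/- Let m ∈ (1/2)ℕ, s ∈ (1/2)ℤ and p ∈ ℤ, and let τ lie in the upper half-plane, z ∉ ℤτ + ℤ, t ∈ ℂ. Then (i) Φ^{[m,s]}(τ, z, −z+pτ, t) = 0 and Φ^{(−)[m,s]}(τ, z, −z+2pτ, t) = 0; equivalently, (ii) Φ^{[m,s]}_1(τ, z, −z+pτ, t) = Φ^{[m,s]}_2(τ, z, −z+pτ, t) and Φ^{(−)[m,s]}_1(τ, z, −z+2pτ, t) = Φ^{(−)[m,s]}_2(τ, z, −z+2pτ, t). -/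
noncomputable section

open scoped BigOperators

namespace Mock

lemma key (ε : ℂ) (hε0 : ε ≠ 0) (c : ℤ) (hε : ε ^ c = 1) (m s : ℝ) (τ z t : ℂ) :
    Phi1 ε m s τ z (-z + (c : ℂ) * τ) t = Phi2 ε m s τ z (-z + (c : ℂ) * τ) t := by
  unfold Phi1 Phi2
  congr 1
  rw [← (Equiv.addRight c).tsum_eq (fun j : ℤ =>
    ε ^ j * e (-(m : ℂ) * (j : ℂ) * (z + (-z + (c : ℂ) * τ)) - (s : ℂ) * (-z + (c : ℂ) * τ))
      * qpow τ (m * (j : ℝ) ^ 2 + s * (j : ℝ)) / (1 - e (-(-z + (c : ℂ) * τ)) * qpow τ (j : ℝ)))]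
  refine tsum_congr fun j => ?_
  simp only [Equiv.coe_addRight]
  have hden : (1 : ℂ) - e (-(-z + (c : ℂ) * τ)) * qpow τ (((j + c : ℤ)) : ℝ)
      = 1 - e z * qpow τ (j : ℝ) := by
    unfold e qpow
    rw [← Complex.exp_add, ← Complex.exp_add]
    congr 1
    push_cast
    ring
  have hnum : ε ^ (j + c) * e (-(m : ℂ) * ((j + c : ℤ) : ℂ) * (z + (-z + (c : ℂ) * τ))
        - (s : ℂ) * (-z + (c : ℂ) * τ)) * qpow τ (m * (((j + c : ℤ)) : ℝ) ^ 2 + s * (((j + c : ℤ)) : ℝ))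
      = ε ^ j * e ((m : ℂ) * (j : ℂ) * (z + (-z + (c : ℂ) * τ)) + (s : ℂ) * z)
        * qpow τ (m * (j : ℝ) ^ 2 + s * (j : ℝ)) := by
    rw [zpow_add₀ hε0, hε, mul_one]
    unfold e qpow
    simp only [mul_assoc, ← Complex.exp_add]
    congr 2
    push_cast
    ring
  rw [hden, hnum]

theorem statement2 (m s : ℝ) (hm : ∃ n : ℕ, 0 < n ∧ m = (n : ℝ) / 2)
    (hs : ∃ n : ℤ, s = (n : ℝ) / 2) (p : ℤ)
    (τ : ℂ) (hτ : 0 < τ.im) (z t : ℂ)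
    (hz : ∀ a b : ℤ, z ≠ (a : ℂ) * τ + (b : ℂ)) :
    Phi 1 m s τ z (-z + (p : ℂ) * τ) t = 0 ∧
    Phi (-1) m s τ z (-z + 2 * (p : ℂ) * τ) t = 0 ∧
    Phi1 1 m s τ z (-z + (p : ℂ) * τ) t = Phi2 1 m s τ z (-z + (p : ℂ) * τ) t ∧
    Phi1 (-1) m s τ z (-z + 2 * (p : ℂ) * τ) t
      = Phi2 (-1) m s τ z (-z + 2 * (p : ℂ) * τ) t := by
  have h1 : Phi1 1 m s τ z (-z + (p : ℂ) * τ) t = Phi2 1 m s τ z (-z + (p : ℂ) * τ) t :=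
    key 1 one_ne_zero p (one_zpow p) m s τ z t
  have h2 : Phi1 (-1) m s τ z (-z + 2 * (p : ℂ) * τ) t
      = Phi2 (-1) m s τ z (-z + 2 * (p : ℂ) * τ) t := by
    have hc : ((2 * p : ℤ) : ℂ) = 2 * (p : ℂ) := by push_cast; ring
    have := key (-1) (by norm_num) (2 * p)
      (by rw [zpow_mul]; norm_num) m s τ z t
    rwa [hc] at this
  exact ⟨sub_eq_zero.mpr h1, sub_eq_zero.mpr h2, h1, h2⟩

end Mock
end
end

section
/- Let m ∈ (1/2)ℕ and let τ lie in the upper half-plane; let z₁, z₂, z₃ ∈ ℂ be such that all occurring series converge (e.g. z₁, z₂, z₃, −z₃+2jτ, z₁−z₂−z₃+2jτ ∉ ℤτ+ℤ for all j ∈ ℤ). Then Σ_{j∈ℤ} (−1)^j q^{(m+1)j²} e^{−2πij(z₁−z₂)+2πijm(z₁−z₃)} Φ^{(−)[m,0]}(τ, z₁, −z₃+2jτ, 0) − Σ_{j∈ℤ} (−1)^j q^{(m+1)j²} e^{2πij(z₁−z₂)+2πijm(z₁−z₃)} Φ^{(−)[m,0]}(τ, z₂, z₁−z₂−z₃+2jτ,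 0) = Σ_{j∈ℤ} (−1)^j q^{(m+1)j²} e^{2πij(z₁−z₂)−2πijm(z₁−z₃)} Φ^{[1,0]}(τ, z₁, −z₂+2jτ, 0) − Σ_{j∈ℤ} (−1)^j q^{(m+1)j²} e^{2πij(z₁−z₂)+2πijm(z₁−z₃)} Φ^{[1,0]}(τ, z₃, z₁−z₂−z₃+2jτ, 0). -/
noncomputable section

open scoped BigOperators

namespace Mock

local notation "π" => Real.pi

/-- master term -/
def Mt (τ u v w : ℂ) (a b c : ℝ) (d g : ℤ) (p : ℤ × ℤ) : ℂ :=
  (-1 : ℂ) ^ (p.1 + g * p.2) *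
    Complex.exp (2 * (π : ℂ) * Complex.I *
      (u * p.1 + v * p.2 + ((a * p.1 ^ 2 + 2 * b * p.1 * p.2 + c * p.2 ^ 2 : ℝ) : ℂ) * τ)) /
    (1 - Complex.exp (2 * (π : ℂ) * Complex.I * (w + ((p.2 + d * p.1 : ℤ) : ℂ) * τ)))

lemma neg_one_zpow_congr {n m : ℤ} (h : 2 ∣ (n - m)) : ((-1 : ℂ)) ^ n = (-1) ^ m := by
  obtain ⟨t, ht⟩ := h
  have hn : n = m + 2 * t := by omega
  have h2 : ((-1 : ℂ)) ^ (2 * t) = 1 := Even.neg_one_zpow ⟨t, by ring⟩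
  rw [hn, zpow_add₀ (by norm_num : (-1 : ℂ) ≠ 0), h2, mul_one]

lemma re_two_pi_I_mul (x : ℂ) : (2 * (π : ℂ) * Complex.I * x).re = -(2 * π * x.im) := by
  simp [Complex.mul_re, Complex.mul_im]

lemma norm_exp_two_pi_I_mul (x : ℂ) :
    ‖Complex.exp (2 * (π : ℂ) * Complex.I * x)‖ = Real.exp (-(2 * π * x.im)) := by
  rw [Complex.norm_exp, re_two_pi_I_mul]

/-- single variable summability -/
lemma summable_exp_linear_quad (b c : ℝ) (hc : 0 < c) :
    Summable fun n : ℤ => Real.exp (b * n - c * n ^ 2) := by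
  have hτ : (0 : ℝ) < ((⟨0, c / π⟩ : ℂ)).im := by
    simpa using div_pos hc Real.pi_pos
  have h := (summable_jacobiTheta₂_term_iff (⟨0, -b / (2 * π)⟩ : ℂ) (⟨0, c / π⟩ : ℂ)).2 hτ
  have h2 : Summable fun n : ℤ =>
      ‖jacobiTheta₂_term n (⟨0, -b / (2 * π)⟩ : ℂ) (⟨0, c / π⟩ : ℂ)‖ :=
    summable_norm_iff.2 h
  refine h2.congr fun n => ?_
  rw [norm_jacobiTheta₂_term]
  congr 1
  have hπ : (π : ℝ) ≠ 0 := Real.pi_ne_zero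
  show -π * n ^ 2 * (c / π) - 2 * π * n * (-b / (2 * π)) = b * n - c * n ^ 2
  field_simp
  ring

/-- uniform denominator lower bound -/
lemma den_bound (τ w : ℂ) (hτ : 0 < τ.im) (hw : ∀ a b : ℤ, w ≠ (a : ℂ) * τ + (b : ℂ)) :
    ∃ δ : ℝ, 0 < δ ∧ ∀ n : ℤ,
      δ ≤ ‖1 - Complex.exp (2 * (π : ℂ) * Complex.I * (w + (n : ℂ) * τ))‖ := by
  have hne : ∀ n : ℤ, Complex.exp (2 * (π : ℂ) * Complex.I * (w + (n : ℂ) * τ)) ≠ 1 := by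
    intro n h
    rw [Complex.exp_eq_one_iff] at h
    obtain ⟨k, hk⟩ := h
    have h2 : (2 * (π : ℂ) * Complex.I) ≠ 0 := by
      simp [Real.pi_ne_zero, Complex.I_ne_zero]
    have h3 : w + (n : ℂ) * τ = (k : ℂ) := by
      apply mul_left_cancel₀ h2
      rw [hk]; ring
    exact hw (-n) k (by push_cast; linear_combination h3)
  have hpos : ∀ n : ℤ,
      0 < ‖1 - Complex.exp (2 * (π : ℂ) * Complex.I * (w + (n : ℂ) * τ))‖ := by
    intro n
    rw [norm_pos_iff]
    exact sub_ne_zero.mpr (Ne.symm (hne n))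
  have him : ∀ n : ℤ, (w + (n : ℂ) * τ).im = w.im + (n : ℝ) * τ.im := by
    intro n; simp [Complex.add_im, Complex.mul_im]
  have hval : ∀ n : ℤ, ‖Complex.exp (2 * (π : ℂ) * Complex.I * (w + (n : ℂ) * τ))‖
      = Real.exp (-(2 * π * (w.im + (n : ℝ) * τ.im))) := by
    intro n; rw [norm_exp_two_pi_I_mul, him]
  set D : ℝ := 2 * π * τ.im with hD
  have hDpos : 0 < D := by positivity
  set R : ℝ := (Real.log 2 + 2 * π * |w.im|) / D with hR
  set N : ℤ := ⌈R⌉ + 1 with hN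
  have hN1 : 1 ≤ N := by
    have : 0 < R := by
      apply div_pos _ hDpos
      have := Real.log_pos one_lt_two
      positivity
    have := Int.ceil_pos.2 this
    omega
  -- tail bounds
  have htail_pos : ∀ n : ℤ, N ≤ n →
      (1:ℝ)/2 ≤ ‖1 - Complex.exp (2 * (π : ℂ) * Complex.I * (w + (n : ℂ) * τ))‖ := by
    intro n hn
    have hRn : R ≤ (n : ℝ) := by
      calc R ≤ (⌈R⌉ : ℝ) := Int.le_ceil R
        _ ≤ (n : ℝ) := by exact_mod_cast (by omega : ⌈R⌉ ≤ n)
    have hA : Real.log 2 + 2 * π * |w.im| ≤ (n : ℝ) * D := (div_le_iff₀ hDpos).mp hRn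
    have hkey : Real.log 2 ≤ 2 * π * (w.im + (n : ℝ) * τ.im) := by
      rw [hD] at hA
      have h3 := mul_le_mul_of_nonneg_left (neg_abs_le w.im)
        (le_of_lt (by positivity : (0:ℝ) < 2 * π))
      nlinarith [hA, h3]
    have hsmall : ‖Complex.exp (2 * (π : ℂ) * Complex.I * (w + (n : ℂ) * τ))‖ ≤ 1/2 := by
      rw [hval n]
      calc Real.exp (-(2 * π * (w.im + (n : ℝ) * τ.im))) ≤ Real.exp (-(Real.log 2)) :=
            Real.exp_le_exp.2 (neg_le_neg hkey)
        _ = 1/2 := by rw [Real.exp_neg, Real.exp_log two_pos]; norm_num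
    calc (1:ℝ)/2 = ‖(1:ℂ)‖ - 1/2 := by norm_num
      _ ≤ ‖(1:ℂ)‖ - ‖Complex.exp (2 * (π : ℂ) * Complex.I * (w + (n : ℂ) * τ))‖ := by linarith
      _ ≤ _ := norm_sub_norm_le _ _
  have htail_neg : ∀ n : ℤ, n ≤ -N →
      (1:ℝ)/2 ≤ ‖1 - Complex.exp (2 * (π : ℂ) * Complex.I * (w + (n : ℂ) * τ))‖ := by
    intro n hn
    have hRn : (n : ℝ) ≤ -R := by
      calc (n : ℝ) ≤ (-N : ℤ) := by exact_mod_cast hn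
        _ = -((N:ℤ):ℝ) := by push_cast; ring
        _ ≤ -R := by
            apply neg_le_neg
            calc R ≤ (⌈R⌉ : ℝ) := Int.le_ceil R
              _ ≤ ((N:ℤ) : ℝ) := by exact_mod_cast (by omega : ⌈R⌉ ≤ N)
    have hA : (n : ℝ) * D ≤ -(Real.log 2 + 2 * π * |w.im|) := by
      have hRD : R * D = Real.log 2 + 2 * π * |w.im| := div_mul_cancel₀ _ hDpos.ne'
      calc (n : ℝ) * D ≤ -R * D := by
            apply mul_le_mul_of_nonneg_right hRn hDpos.le
        _ = _ := by rw [neg_mul, hRD]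
    have hkey : 2 * π * (w.im + (n : ℝ) * τ.im) ≤ -(Real.log 2) := by
      rw [hD] at hA
      have h3 := mul_le_mul_of_nonneg_left (le_abs_self w.im)
        (le_of_lt (by positivity : (0:ℝ) < 2 * π))
      nlinarith [hA, h3]
    have hbig : (2:ℝ) ≤ ‖Complex.exp (2 * (π : ℂ) * Complex.I * (w + (n : ℂ) * τ))‖ := by
      rw [hval n]
      calc (2:ℝ) = Real.exp (Real.log 2) := (Real.exp_log two_pos).symm
        _ ≤ Real.exp (-(2 * π * (w.im + (n : ℝ) * τ.im))) := by
            apply Real.exp_le_exp.2; linarith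
    calc (1:ℝ)/2 ≤ ‖Complex.exp (2 * (π : ℂ) * Complex.I * (w + (n : ℂ) * τ))‖ - ‖(1:ℂ)‖ := by
          simp only [norm_one]; linarith
      _ ≤ ‖Complex.exp (2 * (π : ℂ) * Complex.I * (w + (n : ℂ) * τ)) - 1‖ := norm_sub_norm_le _ _
      _ = ‖1 - Complex.exp (2 * (π : ℂ) * Complex.I * (w + (n : ℂ) * τ))‖ := norm_sub_rev _ _
  -- finite middle part
  have hS : (Finset.Icc (-N) N).Nonempty := ⟨0, by simp; omega⟩
  set δ₁ : ℝ := (Finset.Icc (-N) N).inf' hS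
      (fun n => ‖1 - Complex.exp (2 * (π : ℂ) * Complex.I * (w + (n : ℂ) * τ))‖) with hδ₁
  have hδ₁pos : 0 < δ₁ := by
    rw [hδ₁, Finset.lt_inf'_iff]
    intro n _
    exact hpos n
  refine ⟨min δ₁ (1/2), lt_min hδ₁pos (by norm_num), fun n => ?_⟩
  by_cases hmem : n ∈ Finset.Icc (-N) N
  · calc min δ₁ (1/2) ≤ δ₁ := min_le_left _ _
      _ ≤ _ := Finset.inf'_le _ hmem
  · rw [Finset.mem_Icc] at hmem
    rcases (by omega : N ≤ n ∨ n ≤ -N) with h | h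
    · exact le_trans (min_le_right _ _) (htail_pos n h)
    · exact le_trans (min_le_right _ _) (htail_neg n h)


/-- positive definite quadratic form lower bound -/
lemma quad_lb (a b c : ℝ) (ha : 0 < a) (hpd : b ^ 2 < a * c) (x y : ℝ) :
    (a * c - b ^ 2) / (a + c) * (x ^ 2 + y ^ 2) ≤ a * x ^ 2 + 2 * b * x * y + c * y ^ 2 := by
  have hc : 0 < c := by nlinarith [sq_nonneg b]
  have hac : 0 < a + c := by linarith
  set ε : ℝ := (a * c - b ^ 2) / (a + c) with hε
  have hεac : ε * (a + c) = a * c - b ^ 2 := div_mul_cancel₀ _ hac.ne'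
  have hεa : ε < a := by
    rw [hε, div_lt_iff₀ hac]
    nlinarith [sq_nonneg b]
  have h2 : (a - ε) * ((a * x ^ 2 + 2 * b * x * y + c * y ^ 2) - ε * (x ^ 2 + y ^ 2))
      = ((a - ε) * x + b * y) ^ 2 + (ε * y) ^ 2 := by
    have : ε * ε = ε * (a + c) - (a*c - b^2) + ε*ε := by rw [hεac]; ring
    nlinarith [hεac]
  nlinarith [sq_nonneg ((a - ε) * x + b * y), sq_nonneg (ε * y), h2, hεa]

lemma summable_Mt (τ u v w : ℂ) (a b c : ℝ) (d g : ℤ) (hτ : 0 < τ.im)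
    (ha : 0 < a) (hpd : b ^ 2 < a * c) (hw : ∀ A B : ℤ, w ≠ (A : ℂ) * τ + (B : ℂ)) :
    Summable (Mt τ u v w a b c d g) := by
  obtain ⟨δ, hδ, hden⟩ := den_bound τ w hτ hw
  set ε : ℝ := (a * c - b ^ 2) / (a + c) with hε
  have hc : 0 < c := by nlinarith [sq_nonneg b]
  have hεpos : 0 < ε := div_pos (by nlinarith) (by linarith)
  set C : ℝ := 2 * π * ε * τ.im with hC
  have hCpos : 0 < C := by positivity
  have hf : Summable fun n : ℤ => Real.exp (-(2 * π * u.im) * n - C * n ^ 2) :=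
    summable_exp_linear_quad _ _ hCpos
  have hg : Summable fun n : ℤ => Real.exp (-(2 * π * v.im) * n - C * n ^ 2) :=
    summable_exp_linear_quad _ _ hCpos
  have hprod : Summable fun p : ℤ × ℤ =>
      δ⁻¹ * (Real.exp (-(2 * π * u.im) * p.1 - C * p.1 ^ 2)
        * Real.exp (-(2 * π * v.im) * p.2 - C * p.2 ^ 2)) :=
    (hf.mul_of_nonneg hg (fun _ => (Real.exp_pos _).le) (fun _ => (Real.exp_pos _).le)).mul_left _
  apply Summable.of_norm_bounded hprod
  intro p
  obtain ⟨j, k⟩ := p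
  rw [Mt]
  rw [norm_div, norm_mul]
  have hsgn : ‖((-1 : ℂ)) ^ (j + g * k)‖ = 1 := by
    rw [norm_zpow, norm_neg, norm_one, one_zpow]
  rw [hsgn, one_mul]
  have hnum : ‖Complex.exp (2 * (π : ℂ) * Complex.I *
      (u * (j : ℂ) + v * (k : ℂ) + ((a * (j:ℤ) ^ 2 + 2 * b * (j:ℤ) * (k:ℤ) + c * (k:ℤ) ^ 2 : ℝ) : ℂ) * τ))‖
      ≤ Real.exp (-(2 * π * u.im) * j - C * j ^ 2)
        * Real.exp (-(2 * π * v.im) * k - C * k ^ 2) := by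
    rw [norm_exp_two_pi_I_mul, ← Real.exp_add]
    apply Real.exp_le_exp.2
    have him : (u * (j : ℂ) + v * (k : ℂ)
        + ((a * (j:ℤ) ^ 2 + 2 * b * (j:ℤ) * (k:ℤ) + c * (k:ℤ) ^ 2 : ℝ) : ℂ) * τ).im
        = u.im * j + v.im * k + (a * (j:ℝ) ^ 2 + 2 * b * (j:ℝ) * (k:ℝ) + c * (k:ℝ) ^ 2) * τ.im := by
      simp [Complex.add_im, Complex.mul_im, pow_two, Complex.mul_re,
        Complex.intCast_re, Complex.intCast_im]
    rw [him]
    have hq := quad_lb a b c ha hpd (j : ℝ) (k : ℝ)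
    have := mul_le_mul_of_nonneg_left hq (by positivity : (0:ℝ) ≤ 2 * π * τ.im)
    nlinarith [this]
  have hd := hden (k + d * j)
  have hcast : ((k + d * j : ℤ) : ℂ) = ((k + d * j : ℤ) : ℂ) := rfl
  calc ‖Complex.exp _‖ / ‖1 - Complex.exp (2 * (π : ℂ) * Complex.I * (w + ((k + d * j : ℤ) : ℂ) * τ))‖
      ≤ (Real.exp (-(2 * π * u.im) * j - C * j ^ 2)
        * Real.exp (-(2 * π * v.im) * k - C * k ^ 2)) / δ := by
        apply div_le_div₀ (by positivity) hnum hδ hd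
    _ = δ⁻¹ * (Real.exp (-(2 * π * u.im) * j - C * j ^ 2)
        * Real.exp (-(2 * π * v.im) * k - C * k ^ 2)) := by rw [div_eq_inv_mul]


def phiAC : ℤ × ℤ ≃ ℤ × ℤ :=
  ⟨fun p => (-p.1 - p.2, p.2), fun p => (-p.1 - p.2, p.2),
    fun p => by obtain ⟨a, b⟩ := p; simp only [Prod.mk.injEq, and_true]; omega,
    fun p => by obtain ⟨a, b⟩ := p; simp only [Prod.mk.injEq, and_true]; omega⟩

def phiAD : ℤ × ℤ ≃ ℤ × ℤ :=
  ⟨fun p => (p.1 - p.2, p.2 - 2 * p.1), fun p => (-(p.1 + p.2), -2 * p.1 - p.2),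
    fun p => by obtain ⟨a, b⟩ := p; simp only [Prod.mk.injEq, and_true]; omega,
    fun p => by obtain ⟨a, b⟩ := p; simp only [Prod.mk.injEq, and_true]; omega⟩

def phiBC : ℤ × ℤ ≃ ℤ × ℤ :=
  ⟨fun p => (-p.1 - p.2, -2 * p.1 - p.2), fun p => (p.1 - p.2, -2 * p.1 + p.2),
    fun p => by obtain ⟨a, b⟩ := p; simp only [Prod.mk.injEq, and_true]; omega,
    fun p => by obtain ⟨a, b⟩ := p; simp only [Prod.mk.injEq, and_true]; omega⟩

def phiBD : ℤ × ℤ ≃ ℤ × ℤ :=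
  ⟨fun p => (p.1 - p.2, -p.2), fun p => (p.1 - p.2, -p.2),
    fun p => by obtain ⟨a, b⟩ := p; simp only [Prod.mk.injEq, and_true]; omega,
    fun p => by obtain ⟨a, b⟩ := p; simp only [Prod.mk.injEq, and_true]; omega⟩

lemma merge4 {s₁ s₂ x₁ x₂ x₃ x₄ S y : ℂ} (hs : s₁ * s₂ = S) (h : x₁ + x₂ + x₃ + x₄ = y) :
    s₁ * Complex.exp x₁ * Complex.exp x₂ * (s₂ * Complex.exp x₃ * Complex.exp x₄)
      = S * Complex.exp y := by
  subst hs; subst h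
  rw [Complex.exp_add, Complex.exp_add, Complex.exp_add]; ring


set_option maxHeartbeats 2000000 in
theorem statement3 (m : ℝ) (hm : ∃ n : ℕ, 0 < n ∧ m = (n : ℝ) / 2)
    (τ : ℂ) (hτ : 0 < τ.im) (z₁ z₂ z₃ : ℂ)
    (h₁ : ∀ a b : ℤ, z₁ ≠ (a : ℂ) * τ + (b : ℂ))
    (h₂ : ∀ a b : ℤ, z₂ ≠ (a : ℂ) * τ + (b : ℂ))
    (h₃ : ∀ a b : ℤ, z₃ ≠ (a : ℂ) * τ + (b : ℂ))
    (h₄ : ∀ j a b : ℤ, -z₃ + 2 * (j : ℂ) * τ ≠ (a : ℂ) * τ + (b : ℂ))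
    (h₅ : ∀ j a b : ℤ, z₁ - z₂ - z₃ + 2 * (j : ℂ) * τ ≠ (a : ℂ) * τ + (b : ℂ)) :
    (∑' j : ℤ, (-1 : ℂ) ^ j * qpow τ ((m + 1) * (j : ℝ) ^ 2) *
        e (-(j : ℂ) * (z₁ - z₂) + (j : ℂ) * (m : ℂ) * (z₁ - z₃)) *
        Phi (-1) m 0 τ z₁ (-z₃ + 2 * (j : ℂ) * τ) 0)
    - (∑' j : ℤ, (-1 : ℂ) ^ j * qpow τ ((m + 1) * (j : ℝ) ^ 2) *
        e ((j : ℂ) * (z₁ - z₂) + (j : ℂ) * (m : ℂ) * (z₁ - z₃)) *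
        Phi (-1) m 0 τ z₂ (z₁ - z₂ - z₃ + 2 * (j : ℂ) * τ) 0)
    = (∑' j : ℤ, (-1 : ℂ) ^ j * qpow τ ((m + 1) * (j : ℝ) ^ 2) *
        e ((j : ℂ) * (z₁ - z₂) - (j : ℂ) * (m : ℂ) * (z₁ - z₃)) *
        Phi 1 1 0 τ z₁ (-z₂ + 2 * (j : ℂ) * τ) 0)
    - (∑' j : ℤ, (-1 : ℂ) ^ j * qpow τ ((m + 1) * (j : ℝ) ^ 2) *
        e ((j : ℂ) * (z₁ - z₂) + (j : ℂ) * (m : ℂ) * (z₁ - z₃)) *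
        Phi 1 1 0 τ z₃ (z₁ - z₂ - z₃ + 2 * (j : ℂ) * τ) 0) := by
  obtain ⟨nn, hnn, hmn⟩ := hm
  have hm0 : 0 < m := by
    rw [hmn]
    have : (0 : ℝ) < (nn : ℝ) := by exact_mod_cast hnn
    linarith
  have hwE : ∀ a b : ℤ, (-z₁ + z₂ + z₃) ≠ (a : ℂ) * τ + (b : ℂ) := by
    intro a b h
    exact h₅ 0 (-a) (-b) (by push_cast; linear_combination -h)
  have heneg : e (-(m : ℂ) * 0) = 1 := by simp [e]
  have hepos : e (-((1 : ℝ) : ℂ) * 0) = 1 := by simp [e]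
  have sA1 : Summable (Mt τ (-(z₁ - z₂) + (m : ℂ) * (z₁ - z₃)) ((m : ℂ) * (z₁ - z₃)) z₁ (m + 1) m m 0 1) :=
    summable_Mt τ (-(z₁ - z₂) + (m : ℂ) * (z₁ - z₃)) ((m : ℂ) * (z₁ - z₃)) z₁ (m + 1) m m 0 1 hτ (by linarith) (by nlinarith) h₁
  have sA2 : Summable (Mt τ (-(z₁ - z₂) + (m : ℂ) * (z₁ - z₃)) (-((m : ℂ) * (z₁ - z₃))) z₃ (m + 1) (-m) m (-2) 1) :=
    summable_Mt τ (-(z₁ - z₂) + (m : ℂ) * (z₁ - z₃)) (-((m : ℂ) * (z₁ - z₃))) z₃ (m + 1) (-m) m (-2) 1 hτ (by linarith) (by nlinarith) h₃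
  have sB1 : Summable (Mt τ ((z₁ - z₂) + (m : ℂ) * (z₁ - z₃)) ((m : ℂ) * (z₁ - z₃)) z₂ (m + 1) m m 0 1) :=
    summable_Mt τ ((z₁ - z₂) + (m : ℂ) * (z₁ - z₃)) ((m : ℂ) * (z₁ - z₃)) z₂ (m + 1) m m 0 1 hτ (by linarith) (by nlinarith) h₂
  have sB2 : Summable (Mt τ ((z₁ - z₂) + (m : ℂ) * (z₁ - z₃)) (-((m : ℂ) * (z₁ - z₃))) (-z₁ + z₂ + z₃) (m + 1) (-m) m (-2) 1) :=
    summable_Mt τ ((z₁ - z₂) + (m : ℂ) * (z₁ - z₃)) (-((m : ℂ) * (z₁ - z₃))) (-z₁ + z₂ + z₃) (m + 1) (-m) m (-2) 1 hτ (by linarith) (by nlinarith) hwE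
  have sC1 : Summable (Mt τ ((z₁ - z₂) - (m : ℂ) * (z₁ - z₃)) (z₁ - z₂) z₁ (m + 1) 1 1 0 0) :=
    summable_Mt τ ((z₁ - z₂) - (m : ℂ) * (z₁ - z₃)) (z₁ - z₂) z₁ (m + 1) 1 1 0 0 hτ (by linarith) (by nlinarith) h₁
  have sC2 : Summable (Mt τ ((z₁ - z₂) - (m : ℂ) * (z₁ - z₃)) (-(z₁ - z₂)) z₂ (m + 1) (-1) 1 (-2) 0) :=
    summable_Mt τ ((z₁ - z₂) - (m : ℂ) * (z₁ - z₃)) (-(z₁ - z₂)) z₂ (m + 1) (-1) 1 (-2) 0 hτ (by linarith) (by nlinarith) h₂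
  have sD1 : Summable (Mt τ ((z₁ - z₂) + (m : ℂ) * (z₁ - z₃)) (z₁ - z₂) z₃ (m + 1) 1 1 0 0) :=
    summable_Mt τ ((z₁ - z₂) + (m : ℂ) * (z₁ - z₃)) (z₁ - z₂) z₃ (m + 1) 1 1 0 0 hτ (by linarith) (by nlinarith) h₃
  have sD2 : Summable (Mt τ ((z₁ - z₂) + (m : ℂ) * (z₁ - z₃)) (-(z₁ - z₂)) (-z₁ + z₂ + z₃) (m + 1) (-1) 1 (-2) 0) :=
    summable_Mt τ ((z₁ - z₂) + (m : ℂ) * (z₁ - z₃)) (-(z₁ - z₂)) (-z₁ + z₂ + z₃) (m + 1) (-1) 1 (-2) 0 hτ (by linarith) (by nlinarith) hwE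
  have HA : (∑' j : ℤ, (-1 : ℂ) ^ j * qpow τ ((m + 1) * (j : ℝ) ^ 2) *
        e (-(j : ℂ) * (z₁ - z₂) + (j : ℂ) * (m : ℂ) * (z₁ - z₃)) *
        Phi (-1) m 0 τ z₁ (-z₃ + 2 * (j : ℂ) * τ) 0)
      = (∑' p : ℤ × ℤ, Mt τ (-(z₁ - z₂) + (m : ℂ) * (z₁ - z₃)) ((m : ℂ) * (z₁ - z₃)) z₁ (m + 1) m m 0 1 p) - (∑' p : ℤ × ℤ, Mt τ (-(z₁ - z₂) + (m : ℂ) * (z₁ - z₃)) (-((m : ℂ) * (z₁ - z₃))) z₃ (m + 1) (-m) m (-2) 1 p) := by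
    have epc : ∀ j : ℤ, (-1 : ℂ) ^ j * qpow τ ((m + 1) * (j : ℝ) ^ 2) *
        e (-(j : ℂ) * (z₁ - z₂) + (j : ℂ) * (m : ℂ) * (z₁ - z₃)) *
        Phi (-1) m 0 τ z₁ (-z₃ + 2 * (j : ℂ) * τ) 0
        = (∑' k : ℤ, Mt τ (-(z₁ - z₂) + (m : ℂ) * (z₁ - z₃)) ((m : ℂ) * (z₁ - z₃)) z₁ (m + 1) m m 0 1 (j, k)) - (∑' k : ℤ, Mt τ (-(z₁ - z₂) + (m : ℂ) * (z₁ - z₃)) (-((m : ℂ) * (z₁ - z₃))) z₃ (m + 1) (-m) m (-2) 1 (j, k)) := by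
      intro j
      simp only [Phi, Phi1, Phi2, heneg, one_mul]
      rw [mul_sub, ← tsum_mul_left, ← tsum_mul_left]
      congr 1
      · refine tsum_congr fun k => ?_
        simp only [Mt]
        simp only [e, qpow]
        rw [← mul_div_assoc]
        congr 1
        · exact merge4 (by rw [zpow_add₀ (by norm_num : (-1 : ℂ) ≠ 0), one_mul]) (by push_cast; ring)
        · congr 1
          rw [← Complex.exp_add]
          congr 1
          push_cast
          ring
      · refine tsum_congr fun k => ?_
        simp only [Mt]
        simp only [e, qpow]
        rw [← mul_div_assoc]
        congr 1
        · exact merge4 (by rw [zpow_add₀ (by norm_num : (-1 : ℂ) ≠ 0), one_mul]) (by push_cast; ring)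
        · congr 1
          rw [← Complex.exp_add]
          congr 1
          push_cast
          ring
    rw [tsum_congr epc, Summable.tsum_sub sA1.prod sA2.prod,
      ← Summable.tsum_prod' sA1 sA1.prod_factor, ← Summable.tsum_prod' sA2 sA2.prod_factor]

  have HB : (∑' j : ℤ, (-1 : ℂ) ^ j * qpow τ ((m + 1) * (j : ℝ) ^ 2) *
        e ((j : ℂ) * (z₁ - z₂) + (j : ℂ) * (m : ℂ) * (z₁ - z₃)) *
        Phi (-1) m 0 τ z₂ (z₁ - z₂ - z₃ + 2 * (j : ℂ) * τ) 0)
      = (∑' p : ℤ × ℤ, Mt τ ((z₁ - z₂) + (m : ℂ) * (z₁ - z₃)) ((m : ℂ) * (z₁ - z₃)) z₂ (m + 1) m m 0 1 p) - (∑' p : ℤ × ℤ, Mt τ ((z₁ - z₂) + (m : ℂ) * (z₁ - z₃)) (-((m : ℂ) * (z₁ - z₃))) (-z₁ + z₂ + z₃) (m + 1) (-m) m (-2) 1 p) := by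
    have epc : ∀ j : ℤ, (-1 : ℂ) ^ j * qpow τ ((m + 1) * (j : ℝ) ^ 2) *
        e ((j : ℂ) * (z₁ - z₂) + (j : ℂ) * (m : ℂ) * (z₁ - z₃)) *
        Phi (-1) m 0 τ z₂ (z₁ - z₂ - z₃ + 2 * (j : ℂ) * τ) 0
        = (∑' k : ℤ, Mt τ ((z₁ - z₂) + (m : ℂ) * (z₁ - z₃)) ((m : ℂ) * (z₁ - z₃)) z₂ (m + 1) m m 0 1 (j, k)) - (∑' k : ℤ, Mt τ ((z₁ - z₂) + (m : ℂ) * (z₁ - z₃)) (-((m : ℂ) * (z₁ - z₃))) (-z₁ + z₂ + z₃) (m + 1) (-m) m (-2) 1 (j, k)) := by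
      intro j
      simp only [Phi, Phi1, Phi2, heneg, one_mul]
      rw [mul_sub, ← tsum_mul_left, ← tsum_mul_left]
      congr 1
      · refine tsum_congr fun k => ?_
        simp only [Mt]
        simp only [e, qpow]
        rw [← mul_div_assoc]
        congr 1
        · exact merge4 (by rw [zpow_add₀ (by norm_num : (-1 : ℂ) ≠ 0), one_mul]) (by push_cast; ring)
        · congr 1
          rw [← Complex.exp_add]
          congr 1
          push_cast
          ring
      · refine tsum_congr fun k => ?_
        simp only [Mt]
        simp only [e, qpow]
        rw [← mul_div_assoc]
        congr 1
        · exact merge4 (by rw [zpow_add₀ (by norm_num : (-1 : ℂ) ≠ 0), one_mul]) (by push_cast; ring)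
        · congr 1
          rw [← Complex.exp_add]
          congr 1
          push_cast
          ring
    rw [tsum_congr epc, Summable.tsum_sub sB1.prod sB2.prod,
      ← Summable.tsum_prod' sB1 sB1.prod_factor, ← Summable.tsum_prod' sB2 sB2.prod_factor]

  have HC : (∑' j : ℤ, (-1 : ℂ) ^ j * qpow τ ((m + 1) * (j : ℝ) ^ 2) *
        e ((j : ℂ) * (z₁ - z₂) - (j : ℂ) * (m : ℂ) * (z₁ - z₃)) *
        Phi 1 1 0 τ z₁ (-z₂ + 2 * (j : ℂ) * τ) 0)
      = (∑' p : ℤ × ℤ, Mt τ ((z₁ - z₂) - (m : ℂ) * (z₁ - z₃)) (z₁ - z₂) z₁ (m + 1) 1 1 0 0 p) - (∑' p : ℤ × ℤ, Mt τ ((z₁ - z₂) - (m : ℂ) * (z₁ - z₃)) (-(z₁ - z₂)) z₂ (m + 1) (-1) 1 (-2) 0 p) := by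
    have epc : ∀ j : ℤ, (-1 : ℂ) ^ j * qpow τ ((m + 1) * (j : ℝ) ^ 2) *
        e ((j : ℂ) * (z₁ - z₂) - (j : ℂ) * (m : ℂ) * (z₁ - z₃)) *
        Phi 1 1 0 τ z₁ (-z₂ + 2 * (j : ℂ) * τ) 0
        = (∑' k : ℤ, Mt τ ((z₁ - z₂) - (m : ℂ) * (z₁ - z₃)) (z₁ - z₂) z₁ (m + 1) 1 1 0 0 (j, k)) - (∑' k : ℤ, Mt τ ((z₁ - z₂) - (m : ℂ) * (z₁ - z₃)) (-(z₁ - z₂)) z₂ (m + 1) (-1) 1 (-2) 0 (j, k)) := by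
      intro j
      simp only [Phi, Phi1, Phi2, hepos, one_mul]
      rw [mul_sub, ← tsum_mul_left, ← tsum_mul_left]
      congr 1
      · refine tsum_congr fun k => ?_
        simp only [Mt]
        simp only [e, qpow]
        rw [← mul_div_assoc]
        congr 1
        · exact merge4 (by rw [one_zpow, mul_one, zero_mul, add_zero]) (by push_cast; ring)
        · congr 1
          rw [← Complex.exp_add]
          congr 1
          push_cast
          ring
      · refine tsum_congr fun k => ?_
        simp only [Mt]
        simp only [e, qpow]
        rw [← mul_div_assoc]
        congr 1
        · exact merge4 (by rw [one_zpow, mul_one, zero_mul, add_zero]) (by push_cast; ring)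
        · congr 1
          rw [← Complex.exp_add]
          congr 1
          push_cast
          ring
    rw [tsum_congr epc, Summable.tsum_sub sC1.prod sC2.prod,
      ← Summable.tsum_prod' sC1 sC1.prod_factor, ← Summable.tsum_prod' sC2 sC2.prod_factor]

  have HD : (∑' j : ℤ, (-1 : ℂ) ^ j * qpow τ ((m + 1) * (j : ℝ) ^ 2) *
        e ((j : ℂ) * (z₁ - z₂) + (j : ℂ) * (m : ℂ) * (z₁ - z₃)) *
        Phi 1 1 0 τ z₃ (z₁ - z₂ - z₃ + 2 * (j : ℂ) * τ) 0)
      = (∑' p : ℤ × ℤ, Mt τ ((z₁ - z₂) + (m : ℂ) * (z₁ - z₃)) (z₁ - z₂) z₃ (m + 1) 1 1 0 0 p) - (∑' p : ℤ × ℤ, Mt τ ((z₁ - z₂) + (m : ℂ) * (z₁ - z₃)) (-(z₁ - z₂)) (-z₁ + z₂ + z₃) (m + 1) (-1) 1 (-2) 0 p) := by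
    have epc : ∀ j : ℤ, (-1 : ℂ) ^ j * qpow τ ((m + 1) * (j : ℝ) ^ 2) *
        e ((j : ℂ) * (z₁ - z₂) + (j : ℂ) * (m : ℂ) * (z₁ - z₃)) *
        Phi 1 1 0 τ z₃ (z₁ - z₂ - z₃ + 2 * (j : ℂ) * τ) 0
        = (∑' k : ℤ, Mt τ ((z₁ - z₂) + (m : ℂ) * (z₁ - z₃)) (z₁ - z₂) z₃ (m + 1) 1 1 0 0 (j, k)) - (∑' k : ℤ, Mt τ ((z₁ - z₂) + (m : ℂ) * (z₁ - z₃)) (-(z₁ - z₂)) (-z₁ + z₂ + z₃) (m + 1) (-1) 1 (-2) 0 (j, k)) := by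
      intro j
      simp only [Phi, Phi1, Phi2, hepos, one_mul]
      rw [mul_sub, ← tsum_mul_left, ← tsum_mul_left]
      congr 1
      · refine tsum_congr fun k => ?_
        simp only [Mt]
        simp only [e, qpow]
        rw [← mul_div_assoc]
        congr 1
        · exact merge4 (by rw [one_zpow, mul_one, zero_mul, add_zero]) (by push_cast; ring)
        · congr 1
          rw [← Complex.exp_add]
          congr 1
          push_cast
          ring
      · refine tsum_congr fun k => ?_
        simp only [Mt]
        simp only [e, qpow]
        rw [← mul_div_assoc]
        congr 1
        · exact merge4 (by rw [one_zpow, mul_one, zero_mul, add_zero]) (by push_cast; ring)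
        · congr 1
          rw [← Complex.exp_add]
          congr 1
          push_cast
          ring
    rw [tsum_congr epc, Summable.tsum_sub sD1.prod sD2.prod,
      ← Summable.tsum_prod' sD1 sD1.prod_factor, ← Summable.tsum_prod' sD2 sD2.prod_factor]

  have eqAC : (∑' p : ℤ × ℤ, Mt τ (-(z₁ - z₂) + (m : ℂ) * (z₁ - z₃)) ((m : ℂ) * (z₁ - z₃)) z₁ (m + 1) m m 0 1 p) = (∑' p : ℤ × ℤ, Mt τ ((z₁ - z₂) - (m : ℂ) * (z₁ - z₃)) (z₁ - z₂) z₁ (m + 1) 1 1 0 0 p) := by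
    have hpt : ∀ p : ℤ × ℤ, Mt τ (-(z₁ - z₂) + (m : ℂ) * (z₁ - z₃)) ((m : ℂ) * (z₁ - z₃)) z₁ (m + 1) m m 0 1 p = Mt τ ((z₁ - z₂) - (m : ℂ) * (z₁ - z₃)) (z₁ - z₂) z₁ (m + 1) 1 1 0 0 (phiAC p) := by
      intro p
      obtain ⟨j, k⟩ := p
      simp only [phiAC, Equiv.coe_fn_mk, Mt]
      congr 1
      · congr 1
        · exact neg_one_zpow_congr (by omega)
        · congr 1; push_cast; ring
      · congr 1
        congr 1
        push_cast
        ring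
    rw [tsum_congr hpt]
    exact phiAC.tsum_eq _

  have eqAD : (∑' p : ℤ × ℤ, Mt τ (-(z₁ - z₂) + (m : ℂ) * (z₁ - z₃)) (-((m : ℂ) * (z₁ - z₃))) z₃ (m + 1) (-m) m (-2) 1 p) = (∑' p : ℤ × ℤ, Mt τ ((z₁ - z₂) + (m : ℂ) * (z₁ - z₃)) (z₁ - z₂) z₃ (m + 1) 1 1 0 0 p) := by
    have hpt : ∀ p : ℤ × ℤ, Mt τ (-(z₁ - z₂) + (m : ℂ) * (z₁ - z₃)) (-((m : ℂ) * (z₁ - z₃))) z₃ (m + 1) (-m) m (-2) 1 p = Mt τ ((z₁ - z₂) + (m : ℂ) * (z₁ - z₃)) (z₁ - z₂) z₃ (m + 1) 1 1 0 0 (phiAD p) := by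
      intro p
      obtain ⟨j, k⟩ := p
      simp only [phiAD, Equiv.coe_fn_mk, Mt]
      congr 1
      · congr 1
        · exact neg_one_zpow_congr (by omega)
        · congr 1; push_cast; ring
      · congr 1
        congr 1
        push_cast
        ring
    rw [tsum_congr hpt]
    exact phiAD.tsum_eq _

  have eqBC : (∑' p : ℤ × ℤ, Mt τ ((z₁ - z₂) + (m : ℂ) * (z₁ - z₃)) ((m : ℂ) * (z₁ - z₃)) z₂ (m + 1) m m 0 1 p) = (∑' p : ℤ × ℤ, Mt τ ((z₁ - z₂) - (m : ℂ) * (z₁ - z₃)) (-(z₁ - z₂)) z₂ (m + 1) (-1) 1 (-2) 0 p) := by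
    have hpt : ∀ p : ℤ × ℤ, Mt τ ((z₁ - z₂) + (m : ℂ) * (z₁ - z₃)) ((m : ℂ) * (z₁ - z₃)) z₂ (m + 1) m m 0 1 p = Mt τ ((z₁ - z₂) - (m : ℂ) * (z₁ - z₃)) (-(z₁ - z₂)) z₂ (m + 1) (-1) 1 (-2) 0 (phiBC p) := by
      intro p
      obtain ⟨j, k⟩ := p
      simp only [phiBC, Equiv.coe_fn_mk, Mt]
      congr 1
      · congr 1
        · exact neg_one_zpow_congr (by omega)
        · congr 1; push_cast; ring
      · congr 1
        congr 1
        push_cast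
        ring
    rw [tsum_congr hpt]
    exact phiBC.tsum_eq _

  have eqBD : (∑' p : ℤ × ℤ, Mt τ ((z₁ - z₂) + (m : ℂ) * (z₁ - z₃)) (-((m : ℂ) * (z₁ - z₃))) (-z₁ + z₂ + z₃) (m + 1) (-m) m (-2) 1 p) = (∑' p : ℤ × ℤ, Mt τ ((z₁ - z₂) + (m : ℂ) * (z₁ - z₃)) (-(z₁ - z₂)) (-z₁ + z₂ + z₃) (m + 1) (-1) 1 (-2) 0 p) := by
    have hpt : ∀ p : ℤ × ℤ, Mt τ ((z₁ - z₂) + (m : ℂ) * (z₁ - z₃)) (-((m : ℂ) * (z₁ - z₃))) (-z₁ + z₂ + z₃) (m + 1) (-m) m (-2) 1 p = Mt τ ((z₁ - z₂) + (m : ℂ) * (z₁ - z₃)) (-(z₁ - z₂)) (-z₁ + z₂ + z₃) (m + 1) (-1) 1 (-2) 0 (phiBD p) := by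
      intro p
      obtain ⟨j, k⟩ := p
      simp only [phiBD, Equiv.coe_fn_mk, Mt]
      congr 1
      · congr 1
        · exact neg_one_zpow_congr (by omega)
        · congr 1; push_cast; ring
      · congr 1
        congr 1
        push_cast
        ring
    rw [tsum_congr hpt]
    exact phiBD.tsum_eq _

  rw [HA, HB, HC, HD, eqAC, eqAD, eqBC, eqBD]
  ring

end Mock
end
end

section
/- Let m ∈ (1/2)ℕ, s, b ∈ (1/2)ℤ, a ∈ (1/2)ℤ with a ≥ 0, and j ∈ s + ℤ; let τ lie in the upper half-plane. (1) If e^{4πisb} e^{8πimab} = −1, then R^{(+)}_{j,m}(τ, aτ+b) − R^{(+)}_{2m−j,m}(τ, aτ+b) = −2 e^{2πijb} e^{4πisb} Σ_{k∈ℤ, 1≤k≤2a} e^{4πimbk} q^{−(j+2m(2a−k))(j−2mk)/(4m)}. (2) If (−1)^{2a} e^{4πisb} e^{8πimab} = −1, then R^{(−)}_{j,m}(τ, aτ+b) + R^{(−)}_{2m−j,m}(τ, aτ+b) = −2 e^{2πijb} e^{4πisb} Σ_{k∈ℤ, 1≤k≤2a} (−1)^k e^{4πimbk} q^{−(j+2m(2a−k))(j−2mk)/(4m)}.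 -/
set_option maxHeartbeats 1000000


noncomputable section

open scoped BigOperators

namespace Mock

section AuxiliaryLemmas

open MeasureTheory Set Filter Complex

lemma efun_neg (x : ℝ) : Efun (-x) = -Efun x := by
  unfold Efun
  have h : (∫ t in (0:ℝ)..(-x), Real.exp (-Real.pi * t ^ 2))
      = ∫ t in x..(0:ℝ), Real.exp (-Real.pi * t ^ 2) := by
    have := intervalIntegral.integral_comp_neg (a := (0:ℝ)) (b := -x)
      (f := fun u => Real.exp (-Real.pi * u ^ 2))
    simpa [neg_sq] using this
  rw [h, intervalIntegral.integral_symm]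
  ring

lemma gauss_integrable : Integrable (fun t : ℝ => Real.exp (-Real.pi * t ^ 2)) :=
  integrable_exp_neg_mul_sq Real.pi_pos

lemma efun_tail (x : ℝ) (hx : 0 ≤ x) :
    1 - Efun x = 2 * ∫ t in Ioi x, Real.exp (-Real.pi * t ^ 2) := by
  have hsplit : (∫ t in Ioi (0:ℝ), Real.exp (-Real.pi * t ^ 2))
      = (∫ t in Ioc (0:ℝ) x, Real.exp (-Real.pi * t ^ 2))
        + ∫ t in Ioi x, Real.exp (-Real.pi * t ^ 2) := by
    rw [← setIntegral_union (Ioc_disjoint_Ioi le_rfl) measurableSet_Ioi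
      gauss_integrable.integrableOn gauss_integrable.integrableOn,
      Ioc_union_Ioi_eq_Ioi hx]
  have hhalf : (∫ t in Ioi (0:ℝ), Real.exp (-Real.pi * t ^ 2)) = 1/2 := by
    rw [integral_gaussian_Ioi]
    rw [div_self Real.pi_pos.ne', Real.sqrt_one]
  rw [Efun, intervalIntegral.integral_of_le hx]
  rw [hsplit] at hhalf
  linarith

lemma efun_tail_le (x : ℝ) (hx : 1 ≤ x) :
    |1 - Efun x| ≤ Real.exp (-Real.pi * x ^ 2) := by
  have hx0 : (0:ℝ) ≤ x := by linarith
  rw [efun_tail x hx0]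
  have hderiv : ∀ t ∈ Ici x, HasDerivAt (fun u : ℝ => -Real.exp (-Real.pi * u ^ 2) / (2 * Real.pi))
      (t * Real.exp (-Real.pi * t ^ 2)) t := by
    intro t _
    have h : HasDerivAt (fun u : ℝ => -Real.pi * u ^ 2) (-Real.pi * (2 * t)) t := by
      simpa using ((hasDerivAt_pow 2 t).const_mul (-Real.pi))
    have := (h.exp).neg.div_const (2 * Real.pi)
    refine HasDerivAt.congr_deriv this ?_
    field_simp
  have hlim : Tendsto (fun u : ℝ => -Real.exp (-Real.pi * u ^ 2) / (2 * Real.pi)) atTop (nhds 0) := by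
    have : Tendsto (fun u : ℝ => -Real.pi * u ^ 2) atTop atBot := by
      apply Tendsto.const_mul_atTop_of_neg (by linarith [Real.pi_pos] : -Real.pi < 0)
      exact tendsto_pow_atTop (by norm_num)
    simpa using ((Real.tendsto_exp_atBot.comp this).neg.div_const (2 * Real.pi))
  have hint : IntegrableOn (fun t : ℝ => t * Real.exp (-Real.pi * t ^ 2)) (Ioi x) := by
    refine integrableOn_Ioi_deriv_of_nonneg' hderiv (fun t ht => ?_) hlim
    exact mul_nonneg (by linarith [mem_Ioi.mp ht]) (Real.exp_pos _).le
  have hval : (∫ t in Ioi x, t * Real.exp (-Real.pi * t ^ 2))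
      = Real.exp (-Real.pi * x ^ 2) / (2 * Real.pi) := by
    rw [integral_Ioi_of_hasDerivAt_of_tendsto' hderiv hint hlim]
    ring
  have hmono : (∫ t in Ioi x, Real.exp (-Real.pi * t ^ 2))
      ≤ ∫ t in Ioi x, t * Real.exp (-Real.pi * t ^ 2) := by
    refine setIntegral_mono_on gauss_integrable.integrableOn hint measurableSet_Ioi ?_
    intro t ht
    have h1 : 1 ≤ t := le_trans hx (le_of_lt ht)
    nlinarith [Real.exp_pos (-Real.pi * t ^ 2)]
  have hpos : 0 ≤ ∫ t in Ioi x, Real.exp (-Real.pi * t ^ 2) :=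
    setIntegral_nonneg measurableSet_Ioi (fun t _ => (Real.exp_pos _).le)
  rw [_root_.abs_of_nonneg (by linarith)]
  have hπ : (1:ℝ) ≤ Real.pi := by linarith [Real.pi_gt_three]
  rw [hval] at hmono
  have := Real.exp_pos (-Real.pi * x ^ 2)
  calc 2 * ∫ t in Ioi x, Real.exp (-Real.pi * t ^ 2)
      ≤ 2 * (Real.exp (-Real.pi * x ^ 2) / (2 * Real.pi)) := by linarith
    _ = Real.exp (-Real.pi * x ^ 2) / Real.pi := by
        field_simp
    _ ≤ Real.exp (-Real.pi * x ^ 2) := div_le_self this.le hπ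

lemma summable_exp_quad_nat (c d : ℝ) (hc : 0 < c) :
    Summable (fun n : ℕ => Real.exp (-c * (n:ℝ) ^ 2 + d * n)) := by
  apply Summable.of_norm_bounded_eventually (g := fun n : ℕ => Real.exp (-1) ^ n)
  · exact summable_geometric_of_lt_one (Real.exp_pos _).le (by
      rw [Real.exp_lt_one_iff]; norm_num)
  · rw [Nat.cofinite_eq_atTop]
    obtain ⟨N, hN⟩ := exists_nat_ge ((d + 1) / c)
    filter_upwards [eventually_ge_atTop N] with n hn
    have hn' : (d + 1) / c ≤ (n:ℝ) := le_trans hN (by exact_mod_cast hn)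
    rw [div_le_iff₀ hc] at hn'
    rw [Real.norm_eq_abs, _root_.abs_of_pos (Real.exp_pos _), ← Real.exp_nat_mul]
    apply Real.exp_le_exp.2
    have hn0 : (0:ℝ) ≤ (n:ℝ) := Nat.cast_nonneg n
    nlinarith

lemma summable_exp_quad (c d : ℝ) (hc : 0 < c) :
    Summable (fun k : ℤ => Real.exp (-c * (k:ℝ) ^ 2 + d * k)) := by
  apply Summable.of_nat_of_neg
  · exact (summable_exp_quad_nat c d hc).congr (by intro n; push_cast; ring_nf)
  · exact (summable_exp_quad_nat c (-d) hc).congr (by intro n; push_cast; ring_nf)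

lemma norm_pm_zpow {ε : ℂ} (hε : ε = 1 ∨ ε = -1) (k : ℤ) : ‖ε ^ k‖ = 1 := by
  rcases hε with h | h <;> simp [h, norm_zpow]

lemma summable_R {ε : ℂ} (hε : ε = 1 ∨ ε = -1) (j m : ℝ) (hm : 1 ≤ 2 * m)
    (τ w : ℂ) (hτ : 0 < τ.im) :
    Summable (fun k : ℤ => ε ^ k *
      ((Real.sign (2 * m * (k:ℝ) + 2 * m - 1 / 2) : ℂ)
        - (Efun ((j + 2 * m * (k:ℝ) - 2 * m * (w.im / τ.im)) * Real.sqrt (τ.im / m)) : ℂ)) *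
      Complex.exp (-(Real.pi : ℂ) * Complex.I * τ * ((j:ℂ) + 2*(m:ℂ)*(k:ℂ))^2 / (2*(m:ℂ))
        + 2 * (Real.pi:ℂ) * Complex.I * ((j:ℂ) + 2*(m:ℂ)*(k:ℂ)) * w)) := by
  have hm0 : 0 < m := by linarith
  set y : ℝ := τ.im with hy
  set a : ℝ := w.im / τ.im with ha
  have hwim : w.im = a * y := by rw [ha, div_mul_cancel₀ _ (show τ.im ≠ 0 from hτ.ne')]
  set r : ℝ := Real.sqrt (y / m) with hr
  have hr0 : 0 < r := Real.sqrt_pos.2 (div_pos hτ hm0)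
  have hr2 : r ^ 2 = y / m := Real.sq_sqrt (div_pos hτ hm0).le
  set u : ℝ := j - 2 * m * a with hu
  -- the majorant
  set g : ℤ → ℝ := fun k => Real.exp (-(2*Real.pi*m*y) * (k:ℝ)^2 + (-(2*Real.pi*y*u)) * k)
      * Real.exp (-Real.pi*y*u^2/(2*m)) with hg
  have hgsum : Summable g :=
    (summable_exp_quad _ _ (by positivity)).mul_right _
  -- real part of the exponent
  have hre : ∀ k : ℤ, (-(Real.pi : ℂ) * Complex.I * τ * ((j:ℂ) + 2*(m:ℂ)*(k:ℂ))^2 / (2*(m:ℂ))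
        + 2 * (Real.pi:ℂ) * Complex.I * ((j:ℂ) + 2*(m:ℂ)*(k:ℂ)) * w).re
      = Real.pi * y * (j + 2*m*(k:ℝ))^2 / (2*m) - 2 * Real.pi * (j + 2*m*(k:ℝ)) * w.im := by
    intro k
    have hyp : (-(Real.pi : ℂ) * Complex.I * τ * ((j:ℂ) + 2*(m:ℂ)*(k:ℂ))^2 / (2*(m:ℂ))
        + 2 * (Real.pi:ℂ) * Complex.I * ((j:ℂ) + 2*(m:ℂ)*(k:ℂ)) * w)
        = ((Real.pi * (j + 2*m*(k:ℝ))^2 / (2*m) : ℝ) : ℂ) * (-(Complex.I * τ))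
          + ((2 * Real.pi * (j + 2*m*(k:ℝ)) : ℝ) : ℂ) * (Complex.I * w) := by
      push_cast
      field_simp
    rw [hyp]
    simp only [Complex.add_re, Complex.mul_re, Complex.neg_re, Complex.neg_im,
      Complex.mul_im, Complex.I_re, Complex.I_im, Complex.ofReal_re, Complex.ofReal_im]
    ring
  -- eventual bound
  apply Summable.of_norm_bounded_eventually (g := g) hgsum
  rw [Filter.eventually_cofinite]
  obtain ⟨N, hN⟩ := exists_nat_ge (1/r + |j| + 2*m*|a| + 1)
  apply Set.Finite.subset (Set.finite_Icc (-(N:ℤ)) (N:ℤ))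
  intro k hk
  simp only [Set.mem_setOf_eq] at hk
  by_contra hmem
  apply hk
  simp only [Set.mem_Icc, not_and_or, not_le] at hmem
  set n : ℝ := j + 2*m*(k:ℝ) with hn
  have hnorm : ‖ε ^ k *
      ((Real.sign (2 * m * (k:ℝ) + 2 * m - 1 / 2) : ℂ)
        - (Efun ((j + 2 * m * (k:ℝ) - 2 * m * (w.im / τ.im)) * Real.sqrt (τ.im / m)) : ℂ)) *
      Complex.exp (-(Real.pi : ℂ) * Complex.I * τ * ((j:ℂ) + 2*(m:ℂ)*(k:ℂ))^2 / (2*(m:ℂ))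
        + 2 * (Real.pi:ℂ) * Complex.I * ((j:ℂ) + 2*(m:ℂ)*(k:ℂ)) * w)‖
      = |Real.sign (2 * m * (k:ℝ) + 2 * m - 1 / 2)
          - Efun ((n - 2 * m * a) * r)|
        * Real.exp (Real.pi * y * n^2 / (2*m) - 2 * Real.pi * n * w.im) := by
    rw [norm_mul, norm_mul, norm_pm_zpow hε, one_mul, Complex.norm_exp, hre]
    congr 1
    rw [← Complex.ofReal_sub, Complex.norm_real, Real.norm_eq_abs]
  rw [hnorm]
  -- key exponent inequality, given |sign - Efun| ≤ exp(-π ((n-2ma) r)^2)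
  have key : ∀ hB : |Real.sign (2 * m * (k:ℝ) + 2 * m - 1 / 2) - Efun ((n - 2*m*a) * r)|
      ≤ Real.exp (-Real.pi * ((n - 2*m*a) * r)^2),
      |Real.sign (2 * m * (k:ℝ) + 2 * m - 1 / 2) - Efun ((n - 2 * m * a) * r)|
        * Real.exp (Real.pi * y * n^2 / (2*m) - 2 * Real.pi * n * w.im) ≤ g k := by
    intro hB
    have h1 : |Real.sign (2 * m * (k:ℝ) + 2 * m - 1 / 2) - Efun ((n - 2 * m * a) * r)|
        * Real.exp (Real.pi * y * n^2 / (2*m) - 2 * Real.pi * n * w.im)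
        ≤ Real.exp (-Real.pi * ((n - 2*m*a) * r)^2)
          * Real.exp (Real.pi * y * n^2 / (2*m) - 2 * Real.pi * n * w.im) :=
      mul_le_mul_of_nonneg_right hB (Real.exp_pos _).le
    refine le_trans h1 ?_
    have hgk : g k = Real.exp ((-(2*Real.pi*m*y) * (k:ℝ)^2 + (-(2*Real.pi*y*u)) * k)
        + (-Real.pi*y*u^2/(2*m))) := by
      simp only [hg, ← Real.exp_add]
    rw [hgk, ← Real.exp_add]
    apply Real.exp_le_exp.2
    have hexpand : -Real.pi * ((n - 2*m*a) * r)^2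
          + (Real.pi * y * n^2 / (2*m) - 2 * Real.pi * n * w.im)
        = ((-(2*Real.pi*m*y) * (k:ℝ)^2 + (-(2*Real.pi*y*u)) * k) + (-Real.pi*y*u^2/(2*m)))
          + (- (2 * Real.pi * y * m * a^2)) := by
      rw [mul_pow, hr2, hwim, hn, hu]
      field_simp
      ring
    have hpos : (0:ℝ) ≤ 2 * Real.pi * y * m * a^2 := by positivity
    linarith [hexpand.le]
  have h1r : (0:ℝ) < 1/r := by positivity
  have hma : (0:ℝ) ≤ 2*m*|a| := by positivity
  have hja : (0:ℝ) ≤ |j| := abs_nonneg j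
  have h2m1 : (0:ℝ) ≤ 2*m - 1 := by linarith
  have habs1 : -|j| ≤ j := neg_abs_le j
  have habs2 : j ≤ |j| := le_abs_self j
  have habs3 : -(2*m*|a|) ≤ 2*m*a := by nlinarith [neg_abs_le a]
  have habs4 : 2*m*a ≤ 2*m*|a| := by nlinarith [le_abs_self a]
  have hinvr : 1/r * r = 1 := by field_simp
  clear hk hnorm
  clear_value a r u n
  rcases hmem with hless | hmore
  · -- k < -N : negative side
    have hkR : (k:ℝ) ≤ -(N:ℝ) := by exact_mod_cast hless.le
    have hk0 : (k:ℝ) ≤ 0 := by linarith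
    have h2mk : 2*m*(k:ℝ) ≤ (k:ℝ) := by
      have hfact := mul_nonneg h2m1 (neg_nonneg.2 hk0)
      have heq : (2*m-1)*(-(k:ℝ)) = (k:ℝ) - 2*m*(k:ℝ) := by ring
      linarith
    have hsgn : Real.sign (2 * m * (k:ℝ) + 2 * m - 1 / 2) = -1 := by
      apply Real.sign_of_neg
      have hk1 : (k:ℝ) + 1 ≤ 0 := by linarith
      have hfact := mul_nonpos_of_nonneg_of_nonpos (by linarith : (0:ℝ) ≤ 2*m) hk1
      have heq : 2*m*((k:ℝ)+1) = 2*m*(k:ℝ) + 2*m := by ring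
      linarith
    have hv : n - 2*m*a ≤ -(1/r) := by
      rw [hn]; linarith
    have hX : 1 ≤ -((n - 2*m*a) * r) := by
      have h := mul_le_mul_of_nonneg_right hv hr0.le
      have heq : -(1/r) * r = -(1/r*r) := by ring
      linarith [hinvr]
    have hB : |Real.sign (2 * m * (k:ℝ) + 2 * m - 1 / 2) - Efun ((n - 2*m*a) * r)|
        ≤ Real.exp (-Real.pi * ((n - 2*m*a) * r)^2) := by
      rw [hsgn]
      have heq : -1 - Efun ((n - 2*m*a) * r) = -(1 - Efun (-((n - 2*m*a) * r))) := by
        rw [efun_neg]; ring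
      rw [heq, abs_neg]
      have h := efun_tail_le _ hX
      rwa [neg_sq] at h
    exact key hB
  · -- N < k : positive side
    have hkR : (N:ℝ) ≤ (k:ℝ) := by exact_mod_cast hmore.le
    have hk0 : (0:ℝ) ≤ (k:ℝ) := by linarith
    have h2mk : (k:ℝ) ≤ 2*m*(k:ℝ) := by
      have hfact := mul_nonneg h2m1 hk0
      have heq : (2*m-1)*(k:ℝ) = 2*m*(k:ℝ) - (k:ℝ) := by ring
      linarith
    have hsgn : Real.sign (2 * m * (k:ℝ) + 2 * m - 1 / 2) = 1 := by
      apply Real.sign_of_pos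
      have hfact := mul_nonneg (by linarith : (0:ℝ) ≤ 2*m) hk0
      linarith
    have hv : 1/r ≤ n - 2*m*a := by
      rw [hn]; linarith
    have hX : 1 ≤ (n - 2*m*a) * r := by
      have h := mul_le_mul_of_nonneg_right hv hr0.le
      linarith [hinvr]
    have hB : |Real.sign (2 * m * (k:ℝ) + 2 * m - 1 / 2) - Efun ((n - 2*m*a) * r)|
        ≤ Real.exp (-Real.pi * ((n - 2*m*a) * r)^2) := by
      rw [hsgn]
      exact efun_tail_le _ hX
    exact key hB

lemma e_add (x y : ℂ) : e (x + y) = e x * e y := by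
  rw [e, e, e, ← Complex.exp_add]; ring_nf

lemma e_int (n : ℤ) : e (n : ℂ) = 1 := by
  rw [e, show 2 * (Real.pi:ℂ) * Complex.I * (n:ℂ) = (n:ℂ) * (2 * Real.pi * Complex.I) by ring]
  exact Complex.exp_int_mul_two_pi_mul_I n

lemma e_self_int {x : ℂ} {n : ℤ} (h : x + x = (n:ℂ)) : e (-x) = e x ∧ e x * e x = 1 := by
  have h2 : e x * e x = 1 := by rw [← e_add, h, e_int]
  constructor
  · have h3 : e (-x) * e x = 1 := by rw [← e_add]; simp [e]
    calc e (-x) = e (-x) * (e x * e x) := by rw [h2, mul_one]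
      _ = (e (-x) * e x) * e x := by ring
      _ = e x := by rw [h3, one_mul]
  · exact h2

theorem master (nm : ℕ) (hnm : 0 < nm) {m : ℝ} (hm : m = (nm:ℝ)/2)
    {ns nb : ℤ} {s b : ℝ} (hs : s = (ns:ℝ)/2) (hb : b = (nb:ℝ)/2)
    (na : ℕ) {a : ℝ} (ha : a = (na:ℝ)/2)
    {nj : ℤ} {j : ℝ} (hj : j = s + (nj:ℝ))
    {τ : ℂ} (hτ : 0 < τ.im)
    {ε : ℂ} (hε : ε = 1 ∨ ε = -1)
    (hcond : ε ^ na * e (2*(s:ℂ)*(b:ℂ)) * e (4*(m:ℂ)*(a:ℂ)*(b:ℂ)) = -1) :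
    Rfun ε j m τ ((a:ℂ)*τ+(b:ℂ)) - ε * Rfun ε (2*m-j) m τ ((a:ℂ)*τ+(b:ℂ))
      = -2 * e ((j:ℂ)*(b:ℂ)) * e (2*(s:ℂ)*(b:ℂ)) *
          ∑ k ∈ Finset.Icc 1 na, ε ^ k * e (2*(m:ℂ)*(b:ℂ)*(k:ℂ)) *
            qpow τ (-((j + 2*m*(2*a-(k:ℝ))) * (j - 2*m*(k:ℝ))) / (4*m)) := by
  have hm2 : (1:ℝ) ≤ 2 * m := by
    rw [hm]
    have h1 : (1:ℝ) ≤ (nm:ℝ) := by exact_mod_cast hnm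
    linarith
  have hm0 : (0:ℝ) < m := by linarith
  have hmC : (m:ℂ) ≠ 0 := by exact_mod_cast hm0.ne'
  have hε0 : ε ≠ 0 := by rcases hε with h|h <;> simp [h]
  have hε2 : ε ^ 2 = 1 := by rcases hε with h|h <;> simp [h]
  have hεk2 : ∀ k : ℤ, ε ^ k * ε ^ k = 1 := by
    intro k
    rw [← zpow_add₀ hε0, ← two_mul, zpow_mul, show (2:ℤ) = ((2:ℕ):ℤ) by norm_num,
      zpow_natCast, hε2, one_zpow]
  have hεneg : ∀ k : ℤ, ε ^ (-k) = ε ^ k := by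
    intro k
    rw [zpow_neg]
    exact inv_eq_of_mul_eq_one_right (hεk2 k)
  set w : ℂ := (a:ℂ)*τ+(b:ℂ) with hw
  have ha' : w.im / τ.im = a := by
    have : w.im = a * τ.im := by
      simp [hw, Complex.add_im, Complex.mul_im, Complex.ofReal_re, Complex.ofReal_im]
    rw [this]; field_simp
  set c : ℤ := (na:ℤ) - 1 with hc
  have hnaR : (na:ℝ) = 2*a := by rw [ha]; ring
  -- the e-normalization facts
  have h2sb : e (2*(s:ℂ)*(b:ℂ)) * e (2*(s:ℂ)*(b:ℂ)) = 1 := by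
    rw [← e_add]
    have : (2*(s:ℂ)*(b:ℂ) + 2*(s:ℂ)*(b:ℂ)) = ((ns*nb : ℤ):ℂ) := by
      rw [hs, hb]; push_cast; ring
    rw [this, e_int]
  have h2sC : 2*(s:ℂ) = (ns:ℂ) := by
    have : 2*s = (ns:ℝ) := by rw [hs]; ring
    exact_mod_cast this
  have h2bC : 2*(b:ℂ) = (nb:ℂ) := by
    have : 2*b = (nb:ℝ) := by rw [hb]; ring
    exact_mod_cast this
  have h2mC : 2*(m:ℂ) = (nm:ℂ) := by
    have : 2*m = (nm:ℝ) := by rw [hm]; ring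
    exact_mod_cast this
  have h2aC : 2*(a:ℂ) = (na:ℂ) := by
    have : 2*a = (na:ℝ) := by rw [ha]; ring
    exact_mod_cast this
  have hjC : (j:ℂ) = (s:ℂ) + (nj:ℂ) := by
    rw [hj]; push_cast; ring
  have hS1 := summable_R hε j m hm2 τ w hτ
  have hS2 := summable_R hε (2*m-j) m hm2 τ w hτ
  -- reindexing
  have hreidx : Rfun ε (2*m-j) m τ w = ∑' k : ℤ, (ε ^ (c - k) *
      ((Real.sign (2 * m * ((c - k : ℤ):ℝ) + 2 * m - 1 / 2) : ℂ)
        - (Efun ((2*m - j + 2 * m * ((c - k : ℤ):ℝ) - 2 * m * (w.im / τ.im)) * Real.sqrt (τ.im / m)) : ℂ)) *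
      Complex.exp (-(Real.pi : ℂ) * Complex.I * τ * (((2*m-j:ℝ):ℂ) + 2*(m:ℂ)*((c - k : ℤ):ℂ))^2 / (2*(m:ℂ))
        + 2 * (Real.pi:ℂ) * Complex.I * (((2*m-j:ℝ):ℂ) + 2*(m:ℂ)*((c - k : ℤ):ℂ)) * w)) := by
    rw [Rfun]
    exact ((Equiv.subLeft c).tsum_eq _).symm
  have hSσ : Summable (fun k : ℤ => ε * (ε ^ (c - k) *
      ((Real.sign (2 * m * ((c - k : ℤ):ℝ) + 2 * m - 1 / 2) : ℂ)
        - (Efun ((2*m - j + 2 * m * ((c - k : ℤ):ℝ) - 2 * m * (w.im / τ.im)) * Real.sqrt (τ.im / m)) : ℂ)) *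
      Complex.exp (-(Real.pi : ℂ) * Complex.I * τ * (((2*m-j:ℝ):ℂ) + 2*(m:ℂ)*((c - k : ℤ):ℂ))^2 / (2*(m:ℂ))
        + 2 * (Real.pi:ℂ) * Complex.I * (((2*m-j:ℝ):ℂ) + 2*(m:ℂ)*((c - k : ℤ):ℂ)) * w))) := by
    apply Summable.mul_left
    have h := ((Equiv.subLeft c).summable_iff).2 hS2
    exact h.congr (fun k => rfl)
  have hmain : Rfun ε j m τ w - ε * Rfun ε (2*m-j) m τ w
      = ∑' k : ℤ, ((ε ^ k *
      ((Real.sign (2 * m * (k:ℝ) + 2 * m - 1 / 2) : ℂ)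
        - (Efun ((j + 2 * m * (k:ℝ) - 2 * m * (w.im / τ.im)) * Real.sqrt (τ.im / m)) : ℂ)) *
      Complex.exp (-(Real.pi : ℂ) * Complex.I * τ * ((j:ℂ) + 2*(m:ℂ)*(k:ℂ))^2 / (2*(m:ℂ))
        + 2 * (Real.pi:ℂ) * Complex.I * ((j:ℂ) + 2*(m:ℂ)*(k:ℂ)) * w))
      - ε * (ε ^ (c - k) *
      ((Real.sign (2 * m * ((c - k : ℤ):ℝ) + 2 * m - 1 / 2) : ℂ)
        - (Efun ((2*m - j + 2 * m * ((c - k : ℤ):ℝ) - 2 * m * (w.im / τ.im)) * Real.sqrt (τ.im / m)) : ℂ)) *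
      Complex.exp (-(Real.pi : ℂ) * Complex.I * τ * (((2*m-j:ℝ):ℂ) + 2*(m:ℂ)*((c - k : ℤ):ℂ))^2 / (2*(m:ℂ))
        + 2 * (Real.pi:ℂ) * Complex.I * (((2*m-j:ℝ):ℂ) + 2*(m:ℂ)*((c - k : ℤ):ℂ)) * w))) := by
    rw [Summable.tsum_sub hS1 hSσ, tsum_mul_left, Rfun, hreidx]
  have key : ∀ k : ℤ, ((ε ^ k *
      ((Real.sign (2 * m * (k:ℝ) + 2 * m - 1 / 2) : ℂ)
        - (Efun ((j + 2 * m * (k:ℝ) - 2 * m * (w.im / τ.im)) * Real.sqrt (τ.im / m)) : ℂ)) *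
      Complex.exp (-(Real.pi : ℂ) * Complex.I * τ * ((j:ℂ) + 2*(m:ℂ)*(k:ℂ))^2 / (2*(m:ℂ))
        + 2 * (Real.pi:ℂ) * Complex.I * ((j:ℂ) + 2*(m:ℂ)*(k:ℂ)) * w))
      - ε * (ε ^ (c - k) *
      ((Real.sign (2 * m * ((c - k : ℤ):ℝ) + 2 * m - 1 / 2) : ℂ)
        - (Efun ((2*m - j + 2 * m * ((c - k : ℤ):ℝ) - 2 * m * (w.im / τ.im)) * Real.sqrt (τ.im / m)) : ℂ)) *
      Complex.exp (-(Real.pi : ℂ) * Complex.I * τ * (((2*m-j:ℝ):ℂ) + 2*(m:ℂ)*((c - k : ℤ):ℂ))^2 / (2*(m:ℂ))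
        + 2 * (Real.pi:ℂ) * Complex.I * (((2*m-j:ℝ):ℂ) + 2*(m:ℂ)*((c - k : ℤ):ℂ)) * w)))
      = if 0 ≤ k ∧ k ≤ c then 2 * (ε ^ k *
          Complex.exp (-(Real.pi : ℂ) * Complex.I * τ * ((j:ℂ) + 2*(m:ℂ)*(k:ℂ))^2 / (2*(m:ℂ))
            + 2 * (Real.pi:ℂ) * Complex.I * ((j:ℂ) + 2*(m:ℂ)*(k:ℂ)) * w)) else 0 := by
    intro k
    -- E-argument reflection
    have hEarg : (2*m - j + 2 * m * ((c - k : ℤ):ℝ) - 2 * m * (w.im / τ.im)) * Real.sqrt (τ.im / m)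
        = -((j + 2 * m * (k:ℝ) - 2 * m * (w.im / τ.im)) * Real.sqrt (τ.im / m)) := by
      rw [ha']
      have hck : ((c - k : ℤ):ℝ) = 2*a - 1 - (k:ℝ) := by
        rw [hc]; push_cast; linarith [hnaR]
      rw [hck]; ring
    -- exponent identity
    have harg : (-(Real.pi : ℂ) * Complex.I * τ * (((2*m-j:ℝ):ℂ) + 2*(m:ℂ)*((c - k : ℤ):ℂ))^2 / (2*(m:ℂ))
        + 2 * (Real.pi:ℂ) * Complex.I * (((2*m-j:ℝ):ℂ) + 2*(m:ℂ)*((c - k : ℤ):ℂ)) * w)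
        = (-(Real.pi : ℂ) * Complex.I * τ * ((j:ℂ) + 2*(m:ℂ)*(k:ℂ))^2 / (2*(m:ℂ))
            + 2 * (Real.pi:ℂ) * Complex.I * ((j:ℂ) + 2*(m:ℂ)*(k:ℂ)) * w)
          + 2 * (Real.pi:ℂ) * Complex.I * (2*(s:ℂ)*(b:ℂ))
          + 2 * (Real.pi:ℂ) * Complex.I * (4*(m:ℂ)*(a:ℂ)*(b:ℂ))
          + 2 * (Real.pi:ℂ) * Complex.I * (((-(ns*nb) - nj*nb - nm*nb*k : ℤ)):ℂ) := by
      rw [hw, hc]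
      push_cast
      rw [hjC, ← h2aC, ← h2sC, ← h2bC, ← h2mC]
      field_simp
      ring
    have hexp : Complex.exp (-(Real.pi : ℂ) * Complex.I * τ * (((2*m-j:ℝ):ℂ) + 2*(m:ℂ)*((c - k : ℤ):ℂ))^2 / (2*(m:ℂ))
        + 2 * (Real.pi:ℂ) * Complex.I * (((2*m-j:ℝ):ℂ) + 2*(m:ℂ)*((c - k : ℤ):ℂ)) * w)
        = Complex.exp (-(Real.pi : ℂ) * Complex.I * τ * ((j:ℂ) + 2*(m:ℂ)*(k:ℂ))^2 / (2*(m:ℂ))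
            + 2 * (Real.pi:ℂ) * Complex.I * ((j:ℂ) + 2*(m:ℂ)*(k:ℂ)) * w)
          * e (2*(s:ℂ)*(b:ℂ)) * e (4*(m:ℂ)*(a:ℂ)*(b:ℂ)) := by
      rw [harg, Complex.exp_add, Complex.exp_add, Complex.exp_add]
      have h1 : Complex.exp (2 * (Real.pi:ℂ) * Complex.I * (((-(ns*nb) - nj*nb - nm*nb*k : ℤ)):ℂ))
          = 1 := e_int _
      rw [h1, mul_one]
      rfl
    -- ε bookkeeping
    have hεpart : ε * ε ^ (c - k) = ε ^ na * ε ^ k := by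
      rw [zpow_sub₀ hε0, div_eq_mul_inv, ← zpow_neg, hεneg]
      have h2 : ε * ε ^ c = ε ^ (na:ℤ) := by
        rw [hc, mul_comm, ← zpow_add_one₀ hε0]
        norm_num
      rw [← mul_assoc, h2, zpow_natCast]
    rw [hEarg, efun_neg, hexp, Complex.ofReal_neg]
    by_cases hk : 0 ≤ k ∧ k ≤ c
    · rw [if_pos hk]
      have hs1 : Real.sign (2 * m * (k:ℝ) + 2 * m - 1 / 2) = 1 := by
        apply Real.sign_of_pos
        have hk0 : (0:ℝ) ≤ (k:ℝ) := by exact_mod_cast hk.1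
        nlinarith
      have hs2 : Real.sign (2 * m * ((c - k : ℤ):ℝ) + 2 * m - 1 / 2) = 1 := by
        apply Real.sign_of_pos
        have hk0 : (0:ℝ) ≤ ((c - k : ℤ):ℝ) := by
          have : (0:ℤ) ≤ c - k := by omega
          exact_mod_cast this
        nlinarith
      rw [hs1, hs2, Complex.ofReal_one]
      linear_combination (-(1 + (Complex.ofReal (Efun ((j + 2 * m * (k:ℝ) - 2 * m * (w.im / τ.im)) * Real.sqrt (τ.im / m)))))
          * Complex.exp (-(Real.pi : ℂ) * Complex.I * τ * ((j:ℂ) + 2*(m:ℂ)*(k:ℂ))^2 / (2*(m:ℂ))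
            + 2 * (Real.pi:ℂ) * Complex.I * ((j:ℂ) + 2*(m:ℂ)*(k:ℂ)) * w)
          * e (2*(s:ℂ)*(b:ℂ)) * e (4*(m:ℂ)*(a:ℂ)*(b:ℂ))) * hεpart
        + (-(1 + (Complex.ofReal (Efun ((j + 2 * m * (k:ℝ) - 2 * m * (w.im / τ.im)) * Real.sqrt (τ.im / m)))))
          * Complex.exp (-(Real.pi : ℂ) * Complex.I * τ * ((j:ℂ) + 2*(m:ℂ)*(k:ℂ))^2 / (2*(m:ℂ))
            + 2 * (Real.pi:ℂ) * Complex.I * ((j:ℂ) + 2*(m:ℂ)*(k:ℂ)) * w)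
          * ε ^ k) * hcond
    · rw [if_neg hk]
      rcases lt_or_ge k 0 with hneg | hpos
      · have hs1 : Real.sign (2 * m * (k:ℝ) + 2 * m - 1 / 2) = -1 := by
          apply Real.sign_of_neg
          have hk1 : (k:ℝ) + 1 ≤ 0 := by
            have : k + 1 ≤ 0 := by omega
            exact_mod_cast this
          nlinarith
        have hs2 : Real.sign (2 * m * ((c - k : ℤ):ℝ) + 2 * m - 1 / 2) = 1 := by
          apply Real.sign_of_pos
          have hk0 : (0:ℝ) ≤ ((c - k : ℤ):ℝ) := by
            have : (0:ℤ) ≤ c - k := by omega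
            exact_mod_cast this
          nlinarith
        rw [hs1, hs2, Complex.ofReal_one, Complex.ofReal_neg, Complex.ofReal_one]
        linear_combination (-(1 + (Complex.ofReal (Efun ((j + 2 * m * (k:ℝ) - 2 * m * (w.im / τ.im)) * Real.sqrt (τ.im / m)))))
            * Complex.exp (-(Real.pi : ℂ) * Complex.I * τ * ((j:ℂ) + 2*(m:ℂ)*(k:ℂ))^2 / (2*(m:ℂ))
              + 2 * (Real.pi:ℂ) * Complex.I * ((j:ℂ) + 2*(m:ℂ)*(k:ℂ)) * w)
            * e (2*(s:ℂ)*(b:ℂ)) * e (4*(m:ℂ)*(a:ℂ)*(b:ℂ))) * hεpart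
          + (-(1 + (Complex.ofReal (Efun ((j + 2 * m * (k:ℝ) - 2 * m * (w.im / τ.im)) * Real.sqrt (τ.im / m)))))
            * Complex.exp (-(Real.pi : ℂ) * Complex.I * τ * ((j:ℂ) + 2*(m:ℂ)*(k:ℂ))^2 / (2*(m:ℂ))
              + 2 * (Real.pi:ℂ) * Complex.I * ((j:ℂ) + 2*(m:ℂ)*(k:ℂ)) * w)
            * ε ^ k) * hcond
      · have hck : c < k := by
          rcases (not_and_or.mp hk) with h | h
          · omega
          · omega
        have hs1 : Real.sign (2 * m * (k:ℝ) + 2 * m - 1 / 2) = 1 := by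
          apply Real.sign_of_pos
          have hk0 : (0:ℝ) ≤ (k:ℝ) := by exact_mod_cast hpos
          nlinarith
        have hs2 : Real.sign (2 * m * ((c - k : ℤ):ℝ) + 2 * m - 1 / 2) = -1 := by
          apply Real.sign_of_neg
          have hk1 : ((c - k : ℤ):ℝ) + 1 ≤ 0 := by
            have : (c - k) + 1 ≤ 0 := by omega
            exact_mod_cast this
          nlinarith
        rw [hs1, hs2, Complex.ofReal_one, Complex.ofReal_neg, Complex.ofReal_one]
        linear_combination ((1 - (Complex.ofReal (Efun ((j + 2 * m * (k:ℝ) - 2 * m * (w.im / τ.im)) * Real.sqrt (τ.im / m)))))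
            * Complex.exp (-(Real.pi : ℂ) * Complex.I * τ * ((j:ℂ) + 2*(m:ℂ)*(k:ℂ))^2 / (2*(m:ℂ))
              + 2 * (Real.pi:ℂ) * Complex.I * ((j:ℂ) + 2*(m:ℂ)*(k:ℂ)) * w)
            * e (2*(s:ℂ)*(b:ℂ)) * e (4*(m:ℂ)*(a:ℂ)*(b:ℂ))) * hεpart
          + ((1 - (Complex.ofReal (Efun ((j + 2 * m * (k:ℝ) - 2 * m * (w.im / τ.im)) * Real.sqrt (τ.im / m)))))
            * Complex.exp (-(Real.pi : ℂ) * Complex.I * τ * ((j:ℂ) + 2*(m:ℂ)*(k:ℂ))^2 / (2*(m:ℂ))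
              + 2 * (Real.pi:ℂ) * Complex.I * ((j:ℂ) + 2*(m:ℂ)*(k:ℂ)) * w)
            * ε ^ k) * hcond
  rw [hmain, tsum_congr key]
  rw [tsum_eq_sum (s := Finset.Icc (0:ℤ) c) (fun b hb => if_neg (fun hcon => hb (Finset.mem_Icc.2 hcon)))]
  rw [Finset.sum_congr rfl (fun k hk => if_pos (Finset.mem_Icc.1 hk))]
  rw [Finset.mul_sum]
  refine Finset.sum_nbij' (i := fun k : ℤ => na - k.toNat) (j := fun K : ℕ => (na:ℤ) - (K:ℤ))
    ?_ ?_ ?_ ?_ ?_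
  · intro k hk
    simp only [Finset.mem_Icc, hc] at hk ⊢
    omega
  · intro K hK
    simp only [Finset.mem_Icc, hc] at hK ⊢
    omega
  · intro k hk
    simp only [Finset.mem_Icc, hc] at hk
    omega
  · intro K hK
    simp only [Finset.mem_Icc, hc] at hK
    omega
  · intro k hk
    simp only [Finset.mem_Icc, hc] at hk
    have hKZ : ((na - k.toNat : ℕ):ℤ) = (na:ℤ) - k := by omega
    have hKR : ((na - k.toNat : ℕ):ℝ) = 2*a - (k:ℝ) := by
      have h1 : ((na - k.toNat : ℕ):ℝ) = (((na - k.toNat : ℕ):ℤ):ℝ) := by push_cast; ring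
      rw [h1, hKZ]; push_cast; linarith [hnaR]
    have hKC : ((na - k.toNat : ℕ):ℂ) = 2*(a:ℂ) - (k:ℂ) := by
      have := congrArg (Complex.ofReal) hKR
      push_cast at this ⊢
      convert this using 2 <;> norm_num
    -- rewrite the exponential as qpow * e * e
    have hqpow : Complex.exp (-(Real.pi : ℂ) * Complex.I * τ * ((j:ℂ) + 2*(m:ℂ)*(k:ℂ))^2 / (2*(m:ℂ))
            + 2 * (Real.pi:ℂ) * Complex.I * ((j:ℂ) + 2*(m:ℂ)*(k:ℂ)) * w)
        = qpow τ (-((j + 2*m*(2*a - ((na - k.toNat : ℕ):ℝ))) * (j - 2*m*((na - k.toNat : ℕ):ℝ))) / (4*m))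
          * e (((j*b : ℝ)):ℂ) * e (((2*m*(k:ℝ)*b : ℝ)):ℂ) := by
      rw [qpow, e, e, ← Complex.exp_add, ← Complex.exp_add]
      congr 1
      rw [hw]
      push_cast
      rw [hKC]
      field_simp
      ring
    have hejb : e ((j:ℂ)*(b:ℂ)) = e (((j*b:ℝ)):ℂ) := by
      congr 1; push_cast; ring
    have he4 : e (4*(m:ℂ)*(a:ℂ)*(b:ℂ)) = e (((4*m*a*b:ℝ)):ℂ) := by
      congr 1; push_cast; ring
    have hembk : e (2*(m:ℂ)*(b:ℂ)*(((na - k.toNat : ℕ)):ℂ))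
        = e (((4*m*a*b : ℝ)):ℂ) * e ((((-(2*m*(k:ℝ)*b)) : ℝ)):ℂ) := by
      rw [← e_add]; congr 1; push_cast; rw [hKC]; ring
    have hx2 : (((2*m*(k:ℝ)*b : ℝ)):ℂ) + (((2*m*(k:ℝ)*b : ℝ)):ℂ) = (((nm*nb*k : ℤ)):ℂ) := by
      push_cast
      linear_combination ((k:ℂ)*(nb:ℂ))*h2mC + (2*(m:ℂ)*(k:ℂ))*h2bC
    have hneg2mkb : e ((((-(2*m*(k:ℝ)*b)) : ℝ)):ℂ) = e (((2*m*(k:ℝ)*b : ℝ)):ℂ) := by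
      rw [Complex.ofReal_neg]
      exact (e_self_int hx2).1
    have hεK : ε ^ (na - k.toNat) = ε ^ na * ε ^ k := by
      rw [← zpow_natCast ε (na - k.toNat), hKZ, zpow_sub₀ hε0, div_eq_mul_inv, ← zpow_neg,
        hεneg, zpow_natCast]
    have hcond' : ε ^ na * e (2*(s:ℂ)*(b:ℂ)) * e (((4*m*a*b:ℝ)):ℂ) = -1 := by
      rw [← he4]; exact hcond
    rw [hqpow, hejb, hembk, hneg2mkb, hεK]
    linear_combination (2 * ε^k
        * qpow τ (-((j + 2*m*(2*a - ((na - k.toNat : ℕ):ℝ))) * (j - 2*m*((na - k.toNat : ℕ):ℝ))) / (4*m))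
        * e (((j*b:ℝ)):ℂ) * e (((2*m*(k:ℝ)*b : ℝ)):ℂ)) * hcond'


end AuxiliaryLemmas

theorem statement8 (m : ℝ) (hm : ∃ n : ℕ, 0 < n ∧ m = (n : ℝ) / 2)
    (s b : ℝ) (hs : ∃ n : ℤ, s = (n : ℝ) / 2) (hb : ∃ n : ℤ, b = (n : ℝ) / 2)
    (na : ℕ) (a : ℝ) (ha : a = (na : ℝ) / 2)
    (j : ℝ) (hjs : ∃ n : ℤ, j = s + (n : ℝ))
    (τ : ℂ) (hτ : 0 < τ.im) :
    (e (2 * (s : ℂ) * (b : ℂ)) * e (4 * (m : ℂ) * (a : ℂ) * (b : ℂ)) = -1 →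
      Rfun 1 j m τ ((a : ℂ) * τ + (b : ℂ)) - Rfun 1 (2 * m - j) m τ ((a : ℂ) * τ + (b : ℂ))
        = -2 * e ((j : ℂ) * (b : ℂ)) * e (2 * (s : ℂ) * (b : ℂ)) *
            ∑ k ∈ Finset.Icc 1 na, e (2 * (m : ℂ) * (b : ℂ) * (k : ℂ)) *
              qpow τ (-((j + 2 * m * (2 * a - (k : ℝ))) * (j - 2 * m * (k : ℝ))) / (4 * m))) ∧
    ((-1 : ℂ) ^ na * e (2 * (s : ℂ) * (b : ℂ)) * e (4 * (m : ℂ) * (a : ℂ) * (b : ℂ)) = -1 →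
      Rfun (-1) j m τ ((a : ℂ) * τ + (b : ℂ)) + Rfun (-1) (2 * m - j) m τ ((a : ℂ) * τ + (b : ℂ))
        = -2 * e ((j : ℂ) * (b : ℂ)) * e (2 * (s : ℂ) * (b : ℂ)) *
            ∑ k ∈ Finset.Icc 1 na, (-1 : ℂ) ^ k * e (2 * (m : ℂ) * (b : ℂ) * (k : ℂ)) *
              qpow τ (-((j + 2 * m * (2 * a - (k : ℝ))) * (j - 2 * m * (k : ℝ))) / (4 * m))) := by
  obtain ⟨nm, hnm, hmv⟩ := hm
  obtain ⟨ns, hsv⟩ := hs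
  obtain ⟨nb, hbv⟩ := hb
  obtain ⟨nj, hjv⟩ := hjs
  constructor
  · intro hcond
    have h := master nm hnm hmv hsv hbv na ha hjv hτ (Or.inl rfl)
      (by rw [one_pow, one_mul]; exact hcond)
    rw [one_mul] at h
    simp only [one_pow, one_mul] at h
    exact h
  · intro hcond
    have h := master nm hnm hmv hsv hbv na ha hjv hτ (Or.inr rfl) hcond
    rw [neg_one_mul, sub_neg_eq_add] at h
    exact h


end Mock
end
end
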